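/- arXiv:1010.6261 — 4 statements merged into one kernel-verified Lean document; each statement's English description precedes it below -/
import Mathlib

section
/- Let π = π₁π₂⋯π_n be a permutation of [n]. Then π is a minimal permutation with d descents if and only if π has exactly d descents and satisfies: (1) π starts and ends with a descent (i.e., 1 and n−1 are descents of π); and (2) whenever i is an ascent of π (π_i < π_{i+1}), one has i ∈ {2,3,…,n−2} and the four consecutive entries π_{i−1}π_iπ_{i+1}π_{i+2} are in the same relative order as 2143 or as 3142. -/
/-- `i` (1-based) is a descent of the word `w`, i.e. `1 ≤ i ≤ w.length - 1` and
`w_i > w_{i+1}` (1-based entries). -/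
def DescentAt (w : List ℕ) (i : ℕ) : Prop :=
  1 ≤ i ∧ i + 1 ≤ w.length ∧ w.getD i 0 < w.getD (i - 1) 0

instance (w : List ℕ) (i : ℕ) : Decidable (DescentAt w i) :=
  inferInstanceAs (Decidable (_ ∧ _ ∧ _))

/-- `i` (1-based) is an ascent of the word `w`. -/
def AscentAt (w : List ℕ) (i : ℕ) : Prop :=
  1 ≤ i ∧ i + 1 ≤ w.length ∧ w.getD (i - 1) 0 < w.getD i 0

instance (w : List ℕ) (i : ℕ) : Decidable (AscentAt w i) :=
  inferInstanceAs (Decidable (_ ∧ _ ∧ _))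

/-- The set of descent positions of `w`. -/
def descents (w : List ℕ) : Finset ℕ :=
  (Finset.range w.length).filter (fun i => DescentAt w i)

/-- `w` is a permutation of `[n] = {1,…,n}`, written as a word. -/
def IsPermWord (n : ℕ) (w : List ℕ) : Prop :=
  w.length = n ∧ w.Nodup ∧ ∀ x ∈ w, 1 ≤ x ∧ x ≤ n

/-- Two words of distinct entries are in the same relative order. -/
def SameRelOrder (u v : List ℕ) : Prop :=
  u.length = v.length ∧
    ∀ p q, p < u.length → q < u.length →
      (u.getD p 0 < u.getD q 0 ↔ v.getD p 0 < v.getD q 0)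

/-- `σ ≺ w`: the word `w` contains the pattern `σ`, i.e. `w` has a subsequence
in the same relative order as `σ`. -/
def ContainsPattern (σ w : List ℕ) : Prop :=
  ∃ s : List ℕ, s.Sublist w ∧ SameRelOrder s σ

/-- `w` is a minimal permutation with `d` descents: it has exactly `d` descents and
no strictly shorter permutation with exactly `d` descents occurs in it as a pattern. -/
def MinimalPerm (d : ℕ) (w : List ℕ) : Prop :=
  (descents w).card = d ∧
    ∀ (m : ℕ) (σ : List ℕ), IsPermWord m σ → m < w.length →
      (descents σ).card = d → ¬ ContainsPattern σ w

/-- `w` is a minimal permutation (with its own number of descents). -/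
def IsMinimal (w : List ℕ) : Prop :=
  MinimalPerm (descents w).card w

/-- The set `𝓕_d(n)` of minimal permutations of length `n` with `d` descents. -/
def minimalPerms (d n : ℕ) : Set (List ℕ) :=
  {w | IsPermWord n w ∧ MinimalPerm d w}

/-- `f_d(n) = |𝓕_d(n)|`. -/
noncomputable def fCount (d n : ℕ) : ℕ :=
  (minimalPerms d n).ncard

/-- `w` has ascent sequence `a`: `w` decomposes into maximal strictly decreasing
runs whose lengths, from left to right, are the entries of `a` (maximality is
expressed by the junctions between consecutive runs being ascents). -/
def HasAscentSeq (w a : List ℕ) : Prop :=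
  ∃ bs : List (List ℕ), bs.flatten = w ∧ bs.map List.length = a ∧
    (∀ b ∈ bs, b ≠ [] ∧ List.Chain' (fun x y => x > y) b) ∧
    List.Chain' (fun b c => ∃ x ∈ b.getLast?, ∃ y ∈ c.head?, x < y) bs

/-- The set `𝓕_{a₁,…,a_k}(n)` of minimal permutations of length `n` with
ascent sequence `a = (a₁,…,a_k)`. -/
def minimalPermsAsc (n : ℕ) (a : List ℕ) : Set (List ℕ) :=
  {w | IsPermWord n w ∧ IsMinimal w ∧ HasAscentSeq w a}

/-- `F_{a₁,…,a_k}(n) = |𝓕_{a₁,…,a_k}(n)|`. -/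
noncomputable def FCount (n : ℕ) (a : List ℕ) : ℕ :=
  (minimalPermsAsc n a).ncard

/-- A standard filling of a given cell set by `1,…,N`: zero off the cells,
a bijection from the cells onto `{1,…,N}`, strictly increasing along rows
(second coordinate) and columns (first coordinate). -/
def IsTableauOn (cell : ℕ → ℕ → Prop) (N : ℕ) (T : ℕ → ℕ → ℕ) : Prop :=
  (∀ r c, ¬ cell r c → T r c = 0) ∧
  (∀ r c, cell r c → 1 ≤ T r c ∧ T r c ≤ N) ∧
  (∀ r c r' c', cell r c → cell r' c' → T r c = T r' c' → r = r' ∧ c = c') ∧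
  (∀ v, 1 ≤ v → v ≤ N → ∃ r c, cell r c ∧ T r c = v) ∧
  (∀ r c, cell r c → cell r (c + 1) → T r c < T r (c + 1)) ∧
  (∀ r c, cell r c → cell (r + 1) c → T r c < T (r + 1) c)

/-- The cells of the skew shape `λ/μ` (rows indexed from `0` downward,
columns from `0` rightward): row `r` contains columns `μ_r ≤ c < λ_r`. -/
def skewCell (l m : List ℕ) (r c : ℕ) : Prop :=
  r < l.length ∧ m.getD r 0 ≤ c ∧ c < l.getD r 0

/-- A standard skew Young tableau of shape `λ/μ`. -/
def IsSkewSYT (l m : List ℕ) (T : ℕ → ℕ → ℕ) : Prop :=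
  IsTableauOn (skewCell l m) (l.sum - m.sum) T

/-- `f^{λ/μ}`, the number of standard skew Young tableaux of shape `λ/μ`. -/
noncomputable def skewSYTCount (l m : List ℕ) : ℕ :=
  Nat.card {T : ℕ → ℕ → ℕ // IsSkewSYT l m T}

/-- The row index of the top cell of column `c` in the 2-regular skew shape
with column lengths `a₁,…,a_k` (columns normalized so that the last column
starts in row `0`; consecutive columns overlap in exactly two rows). -/
def colTop (a : List ℕ) (c : ℕ) : ℕ :=
  (a.drop (c + 1)).sum - 2 * (a.length - 1 - c)

/-- The cells of the 2-regular skew shape with column lengths `a₁,…,a_k`: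
column `c` occupies the `a_c` rows starting at `colTop a c`, so that any two
consecutive columns overlap in exactly two rows. -/
def twoRegCell (a : List ℕ) (r c : ℕ) : Prop :=
  c < a.length ∧ colTop a c ≤ r ∧ r < colTop a c + a.getD c 0

/-- A 2-regular skew tableau with column lengths `a₁,…,a_k`: a standard filling
of the 2-regular skew shape by `1,…,a₁+⋯+a_k`. -/
def Is2RegularTableau (a : List ℕ) (T : ℕ → ℕ → ℕ) : Prop :=
  IsTableauOn (twoRegCell a) a.sum T

/-- `𝓜_{2n+1,2i}`: minimal permutations of length `2n+1` with `n+1` descents whose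
unique pair of consecutive descents is `(2i-1, 2i)`. -/
def Mset (n i : ℕ) : Set (List ℕ) :=
  {w | IsPermWord (2 * n + 1) w ∧ MinimalPerm (n + 1) w ∧
    DescentAt w (2 * i - 1) ∧ DescentAt w (2 * i) ∧
    ∀ j, DescentAt w j → DescentAt w (j + 1) → j = 2 * i - 1}

/-- Elementary Knuth transformations on words of distinct integers. -/
inductive KnuthStep : List ℕ → List ℕ → Prop
  | k1 (u v : List ℕ) (x y z : ℕ) (hxy : x < y) (hyz : y < z) :
      KnuthStep (u ++ [x, z, y] ++ v) (u ++ [z, x, y] ++ v)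
  | k2 (u v : List ℕ) (x y z : ℕ) (hxy : x < y) (hyz : y < z) :
      KnuthStep (u ++ [y, x, z] ++ v) (u ++ [y, z, x] ++ v)

/-- Knuth equivalence of words. -/
def KnuthEquiv : List ℕ → List ℕ → Prop := Relation.EqvGen KnuthStep

namespace BPaux

/-- glue indicator -/
def gl : Option ℕ → Option ℕ → ℕ
  | some x, some y => if y < x then 1 else 0
  | _, _ => 0

@[simp] lemma gl_none_left (b : Option ℕ) : gl none b = 0 := by cases b <;> rfl
@[simp] lemma gl_none_right (a : Option ℕ) : gl a none = 0 := by cases a <;> rfl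
@[simp] lemma gl_some_some (x y : ℕ) : gl (some x) (some y) = if y < x then 1 else 0 := rfl

lemma gl_le_one (a b : Option ℕ) : gl a b ≤ 1 := by
  cases a <;> cases b <;> simp [gl] <;> split <;> simp

/-- number of descents, recursive -/
def cd : List ℕ → ℕ
  | [] => 0
  | [_] => 0
  | x :: y :: t => (if y < x then 1 else 0) + cd (y :: t)

@[simp] lemma cd_nil : cd [] = 0 := rfl
@[simp] lemma cd_singleton (x : ℕ) : cd [x] = 0 := rfl
lemma cd_cons_cons (x y : ℕ) (t : List ℕ) :
    cd (x :: y :: t) = (if y < x then 1 else 0) + cd (y :: t) := rfl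

lemma cd_cons (x : ℕ) (l : List ℕ) : cd (x :: l) = gl (some x) l.head? + cd l := by
  cases l with
  | nil => simp
  | cons y t => simp [cd_cons_cons, gl]

lemma cd_append (u v : List ℕ) :
    cd (u ++ v) = cd u + gl u.getLast? v.head? + cd v := by
  induction u with
  | nil => simp
  | cons x u ih =>
    cases u with
    | nil => simpa using cd_cons x v
    | cons y t =>
      rw [List.cons_append, List.cons_append, cd_cons_cons, ← List.cons_append, ih,
        cd_cons_cons, List.getLast?_cons_cons]
      ring

/-- descent count via positions -/
def N (w : List ℕ) : ℕ :=
  ∑ j ∈ Finset.range (w.length - 1), if w.getD (j+1) 0 < w.getD j 0 then 1 else 0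

lemma N_eq_cd (w : List ℕ) : N w = cd w := by
  induction w with
  | nil => simp [N]
  | cons x t ih =>
    cases t with
    | nil => simp [N]
    | cons y t' =>
      rw [cd_cons_cons, ← ih]
      unfold N
      simp only [List.length_cons]
      simp only [List.length_cons, Nat.add_sub_cancel]
      rw [Finset.sum_range_succ' _ _]
      simp only [List.getD_cons_succ, List.getD_cons_zero]
      rw [Nat.add_comm]

lemma descents_card_eq_cd (w : List ℕ) : (descents w).card = cd w := by
  rw [← N_eq_cd]
  unfold descents N
  rw [Finset.card_filter]
  cases hw : w.length with
  | zero => simp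
  | succ m =>
    rw [Finset.sum_range_succ' _ m]
    have h0 : (if DescentAt w 0 then 1 else 0) = 0 := by
      simp [DescentAt]
    rw [h0, add_zero]
    simp only [Nat.succ_sub_one]
    apply Finset.sum_congr rfl
    intro j hj
    simp only [Finset.mem_range] at hj
    have : DescentAt w (j+1) ↔ w.getD (j+1) 0 < w.getD j 0 := by
      unfold DescentAt
      constructor
      · rintro ⟨-, -, h⟩; simpa using h
      · intro h; exact ⟨Nat.le_add_left 1 j, by omega, by simpa using h⟩
    simp [this]

lemma SRO_N_eq {s t : List ℕ} (h : SameRelOrder s t) : N s = N t := by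
  obtain ⟨hlen, hcmp⟩ := h
  unfold N
  rw [hlen]
  apply Finset.sum_congr rfl
  intro j hj
  simp only [Finset.mem_range] at hj
  have h1 : j + 1 < s.length := by omega
  have h2 : j < s.length := by omega
  by_cases hc : s.getD (j+1) 0 < s.getD j 0
  · rw [if_pos hc, if_pos ((hcmp _ _ h1 h2).mp hc)]
  · rw [if_neg hc, if_neg (fun hx => hc ((hcmp _ _ h1 h2).mpr hx))]

lemma exists_eraseIdx_sublist {s w : List ℕ} (h : List.Sublist s w) (hl : s.length < w.length) :
    ∃ k, k < w.length ∧ List.Sublist s (w.eraseIdx k) := by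
  induction h with
  | slnil => simp at hl
  | @cons s' w' a h ih =>
    exact ⟨0, by simp, by simpa using h⟩
  | @cons_cons s' w' a h ih =>
    rcases eq_or_lt_of_le h.length_le with heq | hlt
    · have := h.eq_of_length heq
      subst this
      simp at hl
    · obtain ⟨k, hk, hsub⟩ := ih hlt
      refine ⟨k + 1, by simp; omega, ?_⟩
      show (a :: s').Sublist (a :: w'.eraseIdx k)
      exact hsub.cons_cons a

lemma gl_le (a b : Option ℕ) (x : ℕ) : gl a b ≤ gl a (some x) + gl (some x) b := by
  cases a <;> cases b <;> simp [gl] <;> split <;> split <;> split <;> omega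

lemma take_getLast? (w : List ℕ) (k : ℕ) (h1 : 1 ≤ k) (h2 : k ≤ w.length) :
    (w.take k).getLast? = some (w.getD (k-1) 0) := by
  have hk : k - 1 < w.length := by omega
  rw [List.getLast?_eq_getElem?, List.length_take, List.getD_eq_getElem w 0 hk]
  have : min k w.length - 1 = k - 1 := by omega
  rw [this, List.getElem?_take]
  simp only [if_pos (by omega : k - 1 < k)]
  exact List.getElem?_eq_getElem hk

lemma drop_head? (w : List ℕ) (k : ℕ) (h : k < w.length) :
    (w.drop k).head? = some (w.getD k 0) := by
  rw [List.head?_drop, List.getD_eq_getElem w 0 h]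
  exact List.getElem?_eq_getElem h

lemma delete_decompose (w : List ℕ) (k : ℕ) (hk : k < w.length) :
    cd w = cd (w.take k) + gl (w.take k).getLast? (some (w.getD k 0)) +
      gl (some (w.getD k 0)) (w.drop (k+1)).head? + cd (w.drop (k+1)) ∧
    cd (w.eraseIdx k) = cd (w.take k) + gl (w.take k).getLast? (w.drop (k+1)).head? +
      cd (w.drop (k+1)) := by
  have hsplit : w = w.take k ++ w.getD k 0 :: w.drop (k+1) := by
    conv_lhs => rw [← List.take_append_drop k w, List.drop_eq_getElem_cons hk]
    rw [List.getD_eq_getElem w 0 hk]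
  constructor
  · conv_lhs => rw [hsplit]
    rw [cd_append, cd_cons]
    simp; ring
  · rw [List.eraseIdx_eq_take_drop_succ, cd_append]

lemma cd_eraseIdx_le (w : List ℕ) (k : ℕ) : cd (w.eraseIdx k) ≤ cd w := by
  by_cases hk : k < w.length
  · obtain ⟨h1, h2⟩ := delete_decompose w k hk
    rw [h1, h2]
    have := gl_le (w.take k).getLast? (w.drop (k+1)).head? (w.getD k 0)
    omega
  · rw [List.eraseIdx_of_length_le (by omega)]

lemma cd_sublist_le : ∀ (n : ℕ) (w s : List ℕ), w.length ≤ n → List.Sublist s w → cd s ≤ cd w := by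
  intro n
  induction n with
  | zero =>
    intro w s hw hs
    have := hs.length_le
    interval_cases h : w.length
    · rw [List.length_eq_zero_iff] at h; subst h
      simp [List.sublist_nil.mp hs]
  | succ n ih =>
    intro w s hw hs
    rcases eq_or_lt_of_le hs.length_le with heq | hlt
    · rw [hs.eq_of_length heq]
    · obtain ⟨k, hk, hsub⟩ := exists_eraseIdx_sublist hs hlt
      have hlen : (w.eraseIdx k).length ≤ n := by
        rw [List.length_eraseIdx_of_lt hk]; omega
      exact le_trans (ih _ s hlen hsub) (cd_eraseIdx_le w k)


-- ===== standardization =====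

def rank (s : List ℕ) (x : ℕ) : ℕ := (s.toFinset.filter (fun y => y < x)).card + 1

lemma rank_mono (s : List ℕ) {x y : ℕ} (h : x ≤ y) : rank s x ≤ rank s y := by
  unfold rank
  have hsub : s.toFinset.filter (fun z => z < x) ⊆ s.toFinset.filter (fun z => z < y) := by
    intro z hz
    simp only [Finset.mem_filter] at hz ⊢
    exact ⟨hz.1, by omega⟩
  have := Finset.card_le_card hsub
  omega

lemma rank_lt (s : List ℕ) {x y : ℕ} (hx : x ∈ s) (h : x < y) : rank s x < rank s y := by
  unfold rank
  have hsub : s.toFinset.filter (fun z => z < x) ⊆ s.toFinset.filter (fun z => z < y) := by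
    intro z hz
    simp only [Finset.mem_filter] at hz ⊢
    exact ⟨hz.1, by omega⟩
  have hss : s.toFinset.filter (fun z => z < x) ⊂ s.toFinset.filter (fun z => z < y) := by
    rw [Finset.ssubset_iff_of_subset hsub]
    exact ⟨x, by simp [hx, h], by simp⟩
  have := Finset.card_lt_card hss
  omega

lemma rank_le_length (s : List ℕ) (hnd : s.Nodup) {x : ℕ} (hx : x ∈ s) :
    rank s x ≤ s.length := by
  have hsub : s.toFinset.filter (fun z => z < x) ⊆ s.toFinset.erase x := by
    intro z hz
    simp only [Finset.mem_filter] at hz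
    simp only [Finset.mem_erase]
    exact ⟨by omega, hz.1⟩
  have h1 := Finset.card_le_card hsub
  rw [Finset.card_erase_of_mem (by simpa using hx)] at h1
  have h2 := List.toFinset_card_of_nodup hnd
  have h3 : 1 ≤ s.length := List.length_pos_iff.mpr (List.ne_nil_of_mem hx)
  unfold rank
  omega

lemma rank_lt_iff (s : List ℕ) {x y : ℕ} (hx : x ∈ s) (hy : y ∈ s) :
    x < y ↔ rank s x < rank s y := by
  constructor
  · exact rank_lt s hx
  · intro h
    by_contra hco
    have := rank_mono s (show y ≤ x by omega)
    omega

def std (s : List ℕ) : List ℕ := s.map (fun x => rank s x)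

lemma std_spec (s : List ℕ) (hnd : s.Nodup) :
    IsPermWord s.length (std s) ∧ SameRelOrder s (std s) := by
  have hlen : (std s).length = s.length := List.length_map _
  have hgetD : ∀ p, p < s.length → (std s).getD p 0 = rank s (s.getD p 0) := by
    intro p hp
    rw [List.getD_eq_getElem _ 0 (by omega : p < (std s).length),
      List.getD_eq_getElem _ 0 hp]
    exact List.getElem_map _
  constructor
  · refine ⟨hlen, ?_, ?_⟩
    · apply List.Nodup.map_on _ hnd
      intro x hx y hy hfxy
      by_contra hne
      rcases lt_or_gt_of_ne hne with h | h
      · exact absurd hfxy (Nat.ne_of_lt (rank_lt s hx h))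
      · exact absurd hfxy.symm (Nat.ne_of_lt (rank_lt s hy h))
    · intro z hz
      obtain ⟨x, hx, rfl⟩ := List.mem_map.mp hz
      exact ⟨Nat.le_add_left 1 _, rank_le_length s hnd hx⟩
  · refine ⟨hlen.symm, ?_⟩
    intro p q hp hq
    rw [hgetD p hp, hgetD q hq]
    have hxp : s.getD p 0 ∈ s := by
      rw [List.getD_eq_getElem _ 0 hp]; exact List.getElem_mem hp
    have hxq : s.getD q 0 ∈ s := by
      rw [List.getD_eq_getElem _ 0 hq]; exact List.getElem_mem hq
    exact rank_lt_iff s hxp hxq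

lemma getD_ne (w : List ℕ) (hnd : w.Nodup) {i j : ℕ} (hi : i < w.length)
    (hj : j < w.length) (hij : i ≠ j) : w.getD i 0 ≠ w.getD j 0 := by
  rw [List.getD_eq_getElem _ 0 hi, List.getD_eq_getElem _ 0 hj]
  intro h
  exact hij ((List.Nodup.getElem_inj_iff hnd).mp h)

-- ===== SRO quadruple lemmas =====

lemma sro2143 {a b c e : ℕ} :
    SameRelOrder [a, b, c, e] [2, 1, 4, 3] ↔ (b < a ∧ a < e ∧ e < c) := by
  constructor
  · rintro ⟨-, h⟩
    refine ⟨?_, ?_, ?_⟩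
    · simpa using (h 1 0 (by norm_num) (by norm_num)).mpr (by decide)
    · simpa using (h 0 3 (by norm_num) (by norm_num)).mpr (by decide)
    · simpa using (h 3 2 (by norm_num) (by norm_num)).mpr (by decide)
  · rintro ⟨h1, h2, h3⟩
    refine ⟨rfl, ?_⟩
    intro p q hp hq
    simp only [List.length_cons, List.length_nil] at hp hq
    interval_cases p <;> interval_cases q <;> simp <;> omega

lemma sro3142 {a b c e : ℕ} :
    SameRelOrder [a, b, c, e] [3, 1, 4, 2] ↔ (b < e ∧ e < a ∧ a < c) := by
  constructor
  · rintro ⟨-, h⟩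
    refine ⟨?_, ?_, ?_⟩
    · simpa using (h 1 3 (by norm_num) (by norm_num)).mpr (by decide)
    · simpa using (h 3 0 (by norm_num) (by norm_num)).mpr (by decide)
    · simpa using (h 0 2 (by norm_num) (by norm_num)).mpr (by decide)
  · rintro ⟨h1, h2, h3⟩
    refine ⟨rfl, ?_⟩
    intro p q hp hq
    simp only [List.length_cons, List.length_nil] at hp hq
    interval_cases p <;> interval_cases q <;> simp <;> omega

-- ===== no preserving deletion =====

lemma no_preserving (d : ℕ) (w : List ℕ) (hmin : MinimalPerm d w) (hnd : w.Nodup)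
    (k : ℕ) (hk : k < w.length) (heq : cd (w.eraseIdx k) = cd w) : False := by
  set s := w.eraseIdx k with hs
  have hsnd : s.Nodup := hnd.sublist (List.eraseIdx_sublist w k)
  obtain ⟨hperm, hsro⟩ := std_spec s hsnd
  have hlen : s.length = w.length - 1 := by
    rw [hs]; exact List.length_eraseIdx_of_lt hk
  apply hmin.2 s.length (std s) hperm (by omega) _ ⟨s, List.eraseIdx_sublist w k, hsro⟩
  rw [descents_card_eq_cd, ← N_eq_cd, ← SRO_N_eq hsro, N_eq_cd, heq,
    ← descents_card_eq_cd, hmin.1]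

lemma preserved_interior (d : ℕ) (w : List ℕ) (hmin : MinimalPerm d w) (hnd : w.Nodup)
    (k : ℕ) (h0 : 1 ≤ k) (h1 : k + 1 < w.length)
    (hgl : (if w.getD (k+1) 0 < w.getD (k-1) 0 then (1:ℕ) else 0) =
        (if w.getD k 0 < w.getD (k-1) 0 then 1 else 0) +
        (if w.getD (k+1) 0 < w.getD k 0 then 1 else 0)) : False := by
  apply no_preserving d w hmin hnd k (by omega)
  obtain ⟨hw', hs'⟩ := delete_decompose w k (by omega)
  rw [hw', hs', take_getLast? w k h0 (by omega), drop_head? w (k+1) h1]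
  simp only [gl_some_some]
  omega

lemma preserved_left (d : ℕ) (w : List ℕ) (hmin : MinimalPerm d w) (hnd : w.Nodup)
    (h1 : 1 < w.length) (hgl : ¬ w.getD 1 0 < w.getD 0 0) : False := by
  apply no_preserving d w hmin hnd 0 (by omega)
  obtain ⟨hw', hs'⟩ := delete_decompose w 0 (by omega)
  rw [hw', hs']
  simp only [Nat.zero_add]
  rw [drop_head? w 1 h1]
  simp only [List.take_zero, List.getLast?_nil, gl_none_left, gl_some_some]
  rw [if_neg hgl]

lemma preserved_right (d : ℕ) (w : List ℕ) (hmin : MinimalPerm d w) (hnd : w.Nodup)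
    (h1 : 2 ≤ w.length)
    (hgl : ¬ w.getD (w.length - 1) 0 < w.getD (w.length - 2) 0) : False := by
  apply no_preserving d w hmin hnd (w.length - 1) (by omega)
  obtain ⟨hw', hs'⟩ := delete_decompose w (w.length - 1) (by omega)
  rw [hw', hs', take_getLast? w (w.length - 1) (by omega) (by omega)]
  have hd : w.length - 1 + 1 = w.length := by omega
  rw [hd, List.drop_length]
  have : w.length - 1 - 1 = w.length - 2 := by omega
  rw [this]
  simp only [List.head?_nil, gl_none_right, gl_some_some]
  rw [if_neg hgl]

-- ===== strict deletion under the conditions =====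

lemma strict_del (w : List ℕ) (hnd : w.Nodup)
    (h1 : DescentAt w 1) (h2 : DescentAt w (w.length - 1))
    (hasc : ∀ i, AscentAt w i →
      2 ≤ i ∧ i ≤ w.length - 2 ∧
        (SameRelOrder
            [w.getD (i - 2) 0, w.getD (i - 1) 0, w.getD i 0, w.getD (i + 1) 0]
            [2, 1, 4, 3] ∨
          SameRelOrder
            [w.getD (i - 2) 0, w.getD (i - 1) 0, w.getD i 0, w.getD (i + 1) 0]
            [3, 1, 4, 2]))
    (k : ℕ) (hk : k < w.length) : cd (w.eraseIdx k) < cd w := by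
  have hn2 : 2 ≤ w.length := h1.2.1
  obtain ⟨hw', hs'⟩ := delete_decompose w k hk
  rw [hw', hs']
  have key : gl (w.take k).getLast? (w.drop (k+1)).head? <
      gl (w.take k).getLast? (some (w.getD k 0)) +
      gl (some (w.getD k 0)) (w.drop (k+1)).head? := by
    rcases Nat.eq_zero_or_pos k with rfl | hk0
    · simp only [List.take_zero, List.getLast?_nil, gl_none_left, Nat.zero_add]
      rw [drop_head? w 1 (by omega)]
      have hlt : w.getD 1 0 < w.getD 0 0 := by simpa using h1.2.2
      simp only [gl_some_some]
      rw [if_pos hlt]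
      norm_num
    · rcases eq_or_lt_of_le (show k + 1 ≤ w.length by omega) with hke | hki
      · -- k = w.length - 1
        rw [take_getLast? w k hk0 (by omega), hke, List.drop_length]
        have hlt : w.getD (w.length - 1) 0 < w.getD (w.length - 2) 0 := by
          have := h2.2.2
          have e : w.length - 1 - 1 = w.length - 2 := by omega
          rwa [e] at this
        have e1 : k = w.length - 1 := by omega
        rw [e1]
        have e2 : w.length - 1 - 1 = w.length - 2 := by omega
        rw [e2]
        simp only [List.head?_nil, gl_none_right, gl_some_some]
        rw [if_pos hlt]
        norm_num
      · -- interior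
        rw [take_getLast? w k hk0 (by omega), drop_head? w (k+1) hki]
        simp only [gl_some_some]
        have hax : w.getD (k-1) 0 ≠ w.getD k 0 :=
          getD_ne w hnd (by omega) (by omega) (by omega)
        have hxb : w.getD k 0 ≠ w.getD (k+1) 0 :=
          getD_ne w hnd (by omega) (by omega) (by omega)
        rcases lt_or_gt_of_ne hax with hax' | hax'
        · -- ascent at k
          have hA : AscentAt w k := ⟨hk0, by omega, hax'⟩
          obtain ⟨hb1, hb2, hp⟩ := hasc k hA
          have hbx : w.getD (k+1) 0 < w.getD k 0 := by
            rcases hp with hp | hp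
            · rw [sro2143] at hp
              exact hp.2.2
            · rw [sro3142] at hp
              have := hp.2.1; have := hp.2.2; omega
          have hab : w.getD (k-1) 0 < w.getD (k+1) 0 := by
            rcases hp with hp | hp
            · rw [sro2143] at hp
              have := hp.1; have := hp.2.1; omega
            · rw [sro3142] at hp
              exact hp.1
          rw [if_neg (by omega : ¬ w.getD (k+1) 0 < w.getD (k-1) 0),
            if_neg (by omega : ¬ w.getD k 0 < w.getD (k-1) 0),
            if_pos hbx]
          norm_num
        · -- descent (k-1,k)
          rcases lt_or_gt_of_ne hxb with hxb' | hxb'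
          · -- ascent at k+1
            have hA : AscentAt w (k+1) := ⟨by omega, by omega, by simpa using hxb'⟩
            obtain ⟨hb1, hb2, hp⟩ := hasc (k+1) hA
            have e1 : k + 1 - 2 = k - 1 := by omega
            have e2 : k + 1 - 1 = k := by omega
            rw [e1, e2] at hp
            have hab : w.getD (k-1) 0 < w.getD (k+1) 0 := by
              rcases hp with hp | hp
              · rw [sro2143] at hp
                have := hp.2.1; have := hp.2.2; omega
              · rw [sro3142] at hp
                exact hp.2.2
            rw [if_neg (by omega : ¬ w.getD (k+1) 0 < w.getD (k-1) 0),
              if_pos hax', if_neg (by omega : ¬ w.getD (k+1) 0 < w.getD k 0)]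
            norm_num
          · -- both descents
            rw [if_pos hax', if_pos hxb',
              if_pos (by omega : w.getD (k+1) 0 < w.getD (k-1) 0)]
            norm_num
  omega

end BPaux

/-- Bouvel–Pergola characterization: a permutation `w` of `[n]` is a
minimal permutation with `d` descents iff it has exactly `d` descents, starts and ends
with a descent, and every ascent `i` satisfies `2 ≤ i ≤ n-2` with the four consecutive
entries `w_{i-1} w_i w_{i+1} w_{i+2}` of type `2143` or `3142`. -/
theorem minimalPerm_characterization (n d : ℕ) (hd : 1 ≤ d) (w : List ℕ)
    (hw : IsPermWord n w) :
    MinimalPerm d w ↔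
      (descents w).card = d ∧ DescentAt w 1 ∧ DescentAt w (n - 1) ∧
        ∀ i, AscentAt w i →
          2 ≤ i ∧ i ≤ n - 2 ∧
            (SameRelOrder
                [w.getD (i - 2) 0, w.getD (i - 1) 0, w.getD i 0, w.getD (i + 1) 0]
                [2, 1, 4, 3] ∨
              SameRelOrder
                [w.getD (i - 2) 0, w.getD (i - 1) 0, w.getD i 0, w.getD (i + 1) 0]
                [3, 1, 4, 2]) := by
  obtain ⟨hlen, hnd, -⟩ := hw
  subst hlen
  constructor
  · -- forward
    intro hmin
    have hcd : BPaux.cd w = d := by rw [← BPaux.descents_card_eq_cd, hmin.1]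
    have hn2 : 2 ≤ w.length := by
      obtain ⟨i, hi⟩ := Finset.card_pos.mp (show 0 < (descents w).card by rw [hmin.1]; omega)
      have hi' := (Finset.mem_filter.mp hi).2
      have := hi'.1; have := hi'.2.1
      omega
    have hD1 : DescentAt w 1 := by
      refine ⟨le_refl 1, hn2, ?_⟩
      by_contra hco
      exact BPaux.preserved_left d w hmin hnd (by omega) (by simpa using hco)
    have hDn : DescentAt w (w.length - 1) := by
      refine ⟨by omega, by omega, ?_⟩
      by_contra hco
      have e : w.length - 1 - 1 = w.length - 2 := by omega
      rw [e] at hco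
      exact BPaux.preserved_right d w hmin hnd hn2 hco
    refine ⟨hmin.1, hD1, hDn, ?_⟩
    intro i hi
    obtain ⟨hi1, hi2, hi3⟩ := hi
    have hne1 : i ≠ 1 := by
      intro h
      subst h
      have := hD1.2.2
      omega
    have hnen : i ≠ w.length - 1 := by
      intro h
      have h2 := hDn.2.2
      have e : w.length - 1 - 1 = w.length - 2 := by omega
      rw [e] at h2
      subst h
      have e2 : w.length - 1 - 1 = w.length - 2 := by omega
      rw [e2] at hi3
      omega
    have hgei : 2 ≤ i := by omega
    have hlei : i ≤ w.length - 2 := by omega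
    refine ⟨hgei, hlei, ?_⟩
    -- all four positions in range
    have hr2 : i - 2 < w.length := by omega
    have hr1 : i - 1 < w.length := by omega
    have hr0 : i < w.length := by omega
    have hr3 : i + 1 < w.length := by omega
    have hBA : w.getD (i - 1) 0 < w.getD (i - 2) 0 := by
      rcases lt_or_gt_of_ne (BPaux.getD_ne w hnd hr2 hr1 (by omega)) with h | h
      · exfalso
        apply BPaux.preserved_interior d w hmin hnd (i - 1) (by omega) (by omega)
        have e1 : i - 1 + 1 = i := by omega
        have e2 : i - 1 - 1 = i - 2 := by omega
        rw [e1, e2, if_neg (by omega : ¬ w.getD i 0 < w.getD (i - 2) 0),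
          if_neg (by omega : ¬ w.getD (i - 1) 0 < w.getD (i - 2) 0),
          if_neg (by omega : ¬ w.getD i 0 < w.getD (i - 1) 0)]
      · exact h
    have hEC : w.getD (i + 1) 0 < w.getD i 0 := by
      rcases lt_or_gt_of_ne (BPaux.getD_ne w hnd hr3 hr0 (by omega)) with h | h
      · exact h
      · exfalso
        apply BPaux.preserved_interior d w hmin hnd i (by omega) (by omega)
        rw [if_neg (by omega : ¬ w.getD (i + 1) 0 < w.getD (i - 1) 0),
          if_neg (by omega : ¬ w.getD i 0 < w.getD (i - 1) 0),
          if_neg (by omega : ¬ w.getD (i + 1) 0 < w.getD i 0)]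
    have hAC : w.getD (i - 2) 0 < w.getD i 0 := by
      rcases lt_or_gt_of_ne (BPaux.getD_ne w hnd hr2 hr0 (by omega)) with h | h
      · exact h
      · exfalso
        apply BPaux.preserved_interior d w hmin hnd (i - 1) (by omega) (by omega)
        have e1 : i - 1 + 1 = i := by omega
        have e2 : i - 1 - 1 = i - 2 := by omega
        rw [e1, e2, if_pos (by omega : w.getD i 0 < w.getD (i - 2) 0),
          if_pos hBA, if_neg (by omega : ¬ w.getD i 0 < w.getD (i - 1) 0)]
    have hBE : w.getD (i - 1) 0 < w.getD (i + 1) 0 := by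
      rcases lt_or_gt_of_ne (BPaux.getD_ne w hnd hr1 hr3 (by omega)) with h | h
      · exact h
      · exfalso
        apply BPaux.preserved_interior d w hmin hnd i (by omega) (by omega)
        rw [if_pos (by omega : w.getD (i + 1) 0 < w.getD (i - 1) 0),
          if_neg (by omega : ¬ w.getD i 0 < w.getD (i - 1) 0),
          if_pos (by omega : w.getD (i + 1) 0 < w.getD i 0)]
    rcases lt_or_gt_of_ne (BPaux.getD_ne w hnd hr2 hr3 (by omega)) with h | h
    · left
      exact BPaux.sro2143.mpr ⟨hBA, h, hEC⟩
    · right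
      exact BPaux.sro3142.mpr ⟨hBE, h, hAC⟩
  · -- backward
    rintro ⟨hcard, hD1, hDn, hasc⟩
    refine ⟨hcard, ?_⟩
    rintro m σ hσ hm hσd ⟨s, hsub, hsro⟩
    have hcdw : BPaux.cd w = d := by rw [← BPaux.descents_card_eq_cd, hcard]
    have hslen : s.length = m := hsro.1.trans hσ.1
    have hcds : BPaux.cd s = d := by
      rw [← BPaux.N_eq_cd, BPaux.SRO_N_eq hsro, BPaux.N_eq_cd,
        ← BPaux.descents_card_eq_cd, hσd]
    have hsne : s.length < w.length := by omega
    obtain ⟨k, hk, hsub2⟩ := BPaux.exists_eraseIdx_sublist hsub hsne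
    have hle : BPaux.cd s ≤ BPaux.cd (w.eraseIdx k) :=
      BPaux.cd_sublist_le (w.eraseIdx k).length (w.eraseIdx k) s le_rfl hsub2
    have hstrict := BPaux.strict_del w hnd hD1 hDn hasc k hk
    omega
end

section
/- If π is a minimal permutation with d descents (d ≥ 1) of length n, then d + 1 ≤ n ≤ 2d. In particular, f_d(n) = 0 whenever n < d + 1 or n > 2d. -/
namespace MPaux

/-- Recursive descent counter. -/
def dcount : List ℕ → ℕ
  | x :: y :: t => (if y < x then 1 else 0) + dcount (y :: t)
  | _ => 0

lemma dcount_cons_head (p : ℕ) (l : List ℕ) :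
    dcount (p :: l) = (match l.head? with
      | none => 0
      | some h => if h < p then 1 else 0) + dcount l := by
  cases l <;> rfl

lemma dcount_append (u : List ℕ) {l₁ l₂ : List ℕ} (hh : l₁.head? = l₂.head?)
    (hd : dcount l₁ = dcount l₂) : dcount (u ++ l₁) = dcount (u ++ l₂) := by
  induction u with
  | nil => simpa using hd
  | cons p u ih =>
    have hh' : (u ++ l₁).head? = (u ++ l₂).head? := by
      cases u with
      | nil => simpa using hh
      | cons q u' => rfl
    simp only [List.cons_append, dcount_cons_head, hh', ih]

lemma mem_descents {w : List ℕ} {i : ℕ} :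
    i ∈ descents w ↔ i < w.length ∧ DescentAt w i := by
  simp [descents]

lemma descentAt_cons_succ (a : ℕ) (l : List ℕ) {i : ℕ} (hi : 1 ≤ i) :
    DescentAt (a :: l) (i + 1) ↔ DescentAt l i := by
  obtain ⟨j, rfl⟩ : ∃ j, i = j + 1 := ⟨i - 1, by omega⟩
  simp only [DescentAt, List.getD_cons_succ, List.length_cons, Nat.add_sub_cancel]
  omega

lemma descentAt_one_cons_cons (a b : ℕ) (t : List ℕ) :
    DescentAt (a :: b :: t) 1 ↔ b < a := by
  simp [DescentAt]

lemma descents_cons (a : ℕ) (l : List ℕ) :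
    descents (a :: l)
      = (if DescentAt (a :: l) 1 then {1} else ∅) ∪ (descents l).image (· + 1) := by
  ext i
  simp only [mem_descents, Finset.mem_union, Finset.mem_image]
  constructor
  · rintro ⟨hlen, hd⟩
    rcases eq_or_lt_of_le hd.1 with h | h
    · left
      rw [if_pos (h ▸ hd)]
      simp [← h]
    · right
      obtain ⟨j, rfl⟩ : ∃ j, i = j + 1 := ⟨i - 1, by omega⟩
      have hj : 1 ≤ j := by omega
      refine ⟨j, ⟨?_, (descentAt_cons_succ a l hj).mp hd⟩, rfl⟩
      simp only [List.length_cons] at hlen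
      omega
  · rintro (h | ⟨j, ⟨hjl, hj⟩, rfl⟩)
    · split_ifs at h with hc
      · simp only [Finset.mem_singleton] at h
        subst h
        have := hc.2.1
        simp only [List.length_cons] at this ⊢
        exact ⟨by omega, hc⟩
      · simp at h
    · exact ⟨by simp only [List.length_cons]; omega, (descentAt_cons_succ a l hj.1).mpr hj⟩

lemma card_descents_cons (a : ℕ) (l : List ℕ) :
    (descents (a :: l)).card
      = (if DescentAt (a :: l) 1 then 1 else 0) + (descents l).card := by
  rw [descents_cons]
  have hdisj : Disjoint (if DescentAt (a :: l) 1 then ({1} : Finset ℕ) else ∅)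
      ((descents l).image (· + 1)) := by
    refine Finset.disjoint_left.mpr fun x hx hx2 => ?_
    simp only [Finset.mem_image, mem_descents] at hx2
    obtain ⟨j, ⟨_, hj⟩, rfl⟩ := hx2
    have hj1 : 1 ≤ j := hj.1
    split_ifs at hx with hc
    · simp only [Finset.mem_singleton] at hx
      omega
    · simp at hx
  rw [Finset.card_union_of_disjoint hdisj,
    Finset.card_image_of_injective _ (fun x y h => by simpa using h : Function.Injective (· + 1))]
  congr 1
  split_ifs <;> simp

lemma card_descents_eq_dcount : ∀ w : List ℕ, (descents w).card = dcount w := by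
  intro w
  induction w with
  | nil => simp [descents, dcount]
  | cons a l ih =>
    rw [card_descents_cons, ih]
    cases l with
    | nil =>
      have : ¬ DescentAt [a] 1 := by simp [DescentAt]
      simp [this, dcount]
    | cons b t =>
      simp only [descentAt_one_cons_cons, dcount]

lemma descents_eq_of_sameRelOrder {u v : List ℕ} (h : SameRelOrder u v) :
    descents u = descents v := by
  obtain ⟨hlen, hrel⟩ := h
  ext i
  simp only [mem_descents, DescentAt]
  constructor
  · rintro ⟨hi, h1, h2, h3⟩
    exact ⟨by omega, h1, by omega, (hrel i (i - 1) (by omega) (by omega)).mp h3⟩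
  · rintro ⟨hi, h1, h2, h3⟩
    exact ⟨by omega, h1, by omega, (hrel i (i - 1) (by omega) (by omega)).mpr h3⟩

/-! ### Standardization -/

def fstd (s : List ℕ) (x : ℕ) : ℕ := s.countP (fun y => y ≤ x)

lemma fstd_mono (s : List ℕ) {x y : ℕ} (hxy : x ≤ y) : fstd s x ≤ fstd s y :=
  List.countP_mono_left fun z _ hz => by
    simp only [decide_eq_true_eq] at hz ⊢; omega

lemma fstd_strict {s : List ℕ} {x y : ℕ} (hy : y ∈ s) (hxy : x < y) :
    fstd s x < fstd s y := by
  induction s with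
  | nil => simp at hy
  | cons a t ih =>
    simp only [fstd, List.countP_cons] at *
    rcases List.mem_cons.mp hy with rfl | hy'
    · have h1 : List.countP (fun z => decide (z ≤ x)) t
          ≤ List.countP (fun z => decide (z ≤ y)) t :=
        List.countP_mono_left fun z _ hz => by
          simp only [decide_eq_true_eq] at hz ⊢; omega
      have hx : decide (y ≤ x) = false := by simp; omega
      have hy2 : decide (y ≤ y) = true := by simp
      rw [hx, hy2]
      simp only [Bool.false_eq_true, if_false, if_true]
      omega
    · have h2 : (if decide (a ≤ x) = true then 1 else 0)
          ≤ (if decide (a ≤ y) = true then 1 else 0) := by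
        split_ifs with g1 g2 <;> simp_all <;> omega
      have := ih hy'
      omega

lemma fstd_iff {s : List ℕ} {x y : ℕ} (hx : x ∈ s) (hy : y ∈ s) :
    x < y ↔ fstd s x < fstd s y := by
  constructor
  · exact fstd_strict hy
  · intro h
    by_contra hxy
    exact absurd (fstd_mono s (by omega : y ≤ x)) (by omega)

def stdz (s : List ℕ) : List ℕ := s.map (fstd s)

lemma stdz_perm {s : List ℕ} (hnd : s.Nodup) : IsPermWord s.length (stdz s) := by
  refine ⟨by simp [stdz], ?_, ?_⟩
  · refine List.Nodup.map_on (fun x hx y hy hxy => ?_) hnd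
    rcases lt_trichotomy x y with h | h | h
    · exact absurd hxy (Nat.ne_of_lt ((fstd_iff hx hy).mp h))
    · exact h
    · exact absurd hxy.symm (Nat.ne_of_lt ((fstd_iff hy hx).mp h))
  · intro x hx
    simp only [stdz, List.mem_map] at hx
    obtain ⟨y, hy, rfl⟩ := hx
    constructor
    · exact List.countP_pos_iff.mpr ⟨y, hy, by simp⟩
    · exact List.countP_le_length

lemma stdz_srel {s : List ℕ} : SameRelOrder s (stdz s) := by
  refine ⟨by simp [stdz], fun p q hp hq => ?_⟩
  have hp' : p < (stdz s).length := by simpa [stdz] using hp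
  have hq' : q < (stdz s).length := by simpa [stdz] using hq
  rw [List.getD_eq_getElem _ _ hp, List.getD_eq_getElem _ _ hq,
    List.getD_eq_getElem _ _ hp', List.getD_eq_getElem _ _ hq']
  simp only [stdz, List.getElem_map]
  exact fstd_iff (List.getElem_mem _) (List.getElem_mem _)

end MPaux
namespace MPaux

lemma find_config : ∀ (N : ℕ) (w : List ℕ), w.length ≤ N → w.Nodup →
    2 * dcount w + 1 ≤ w.length →
    (∀ a b t, w = a :: b :: t → b < a) →
    (∃ u x y, w = u ++ [x, y] ∧ x < y) ∨
    (∃ u x y z v, w = u ++ ([x, y, z] ++ v) ∧ x < y ∧ y < z) ∨ w.length ≤ 1 := by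
  intro N
  induction N with
  | zero =>
    intro w hw _ _ _
    right; right; omega
  | succ N ih =>
    intro w hwN hnd hlen hstart
    match w with
    | [] => right; right; simp
    | [a] => right; right; simp
    | a :: b :: t =>
      have hba : b < a := hstart a b t rfl
      match t with
      | [] =>
        exfalso
        simp only [dcount, if_pos hba, List.length_cons, List.length_nil] at hlen
        omega
      | c :: t' =>
        have hbc : b ≠ c := by
          have := List.nodup_cons.mp hnd.of_cons
          exact fun h => this.1 (h ▸ List.mem_cons_self)
        rcases lt_or_gt_of_ne hbc with hlt | hgt
        · -- b < c : ascent after the first descent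
          match t' with
          | [] =>
            left
            exact ⟨[a], b, c, rfl, hlt⟩
          | e :: t'' =>
            have hce : c ≠ e := by
              have := List.nodup_cons.mp hnd.of_cons.of_cons
              exact fun h => this.1 (h ▸ List.mem_cons_self)
            rcases lt_or_gt_of_ne hce with hlt2 | hgt2
            · right; left
              exact ⟨[a], b, c, e, t'', rfl, hlt, hlt2⟩
            · -- e < c : recurse on c :: e :: t''
              have hlen' : 2 * dcount (c :: e :: t'') + 1 ≤ (c :: e :: t'').length := by
                have : dcount (a :: b :: c :: e :: t'')
                    = 1 + (0 + (1 + dcount (e :: t''))) := by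
                  simp only [dcount, if_pos hba, if_neg (by omega : ¬ c < b),
                    if_pos hgt2]
                rw [this] at hlen
                simp only [List.length_cons] at hlen ⊢
                simp only [dcount, if_pos hgt2]
                omega
              have hres := ih (c :: e :: t'') (by simp at hwN ⊢; omega)
                hnd.of_cons.of_cons hlen'
                (by
                  rintro a' b' t₀ h
                  obtain ⟨rfl, rfl, rfl⟩ := by simpa using h
                  exact hgt2)
              rcases hres with ⟨u, x, y, heq, hxy⟩ | ⟨u, x, y, z, v, heq, hxy, hyz⟩ | hsh
              · left; exact ⟨a :: b :: u, x, y, by rw [heq]; rfl, hxy⟩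
              · right; left; exact ⟨a :: b :: u, x, y, z, v, by rw [heq]; rfl, hxy, hyz⟩
              · simp at hsh
        · -- c < b : recurse on b :: c :: t'
          have hlen' : 2 * dcount (b :: c :: t') + 1 ≤ (b :: c :: t').length := by
            have : dcount (a :: b :: c :: t') = 1 + dcount (b :: c :: t') := by
              simp only [dcount, if_pos hba]
            rw [this] at hlen
            simp only [List.length_cons] at hlen ⊢
            omega
          have hres := ih (b :: c :: t') (by simp at hwN ⊢; omega) hnd.of_cons hlen'
            (by
              rintro a' b' t₀ h
              obtain ⟨rfl, rfl, rfl⟩ := by simpa using h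
              exact hgt)
          rcases hres with ⟨u, x, y, heq, hxy⟩ | ⟨u, x, y, z, v, heq, hxy, hyz⟩ | hsh
          · left; exact ⟨a :: u, x, y, by rw [heq]; rfl, hxy⟩
          · right; left; exact ⟨a :: u, x, y, z, v, by rw [heq]; rfl, hxy, hyz⟩
          · simp at hsh

lemma exists_deletion {w : List ℕ} (hnd : w.Nodup)
    (hlen : 2 * dcount w + 1 ≤ w.length) (h2 : 2 ≤ w.length) :
    ∃ s : List ℕ, s.Sublist w ∧ s.length + 1 = w.length ∧ dcount s = dcount w := by
  match w with
  | [] => simp at h2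
  | [a] => simp at h2
  | a :: b :: t =>
    rcases Nat.lt_or_ge a b with hab | hba'
    · refine ⟨b :: t, List.sublist_cons_self _ _, by simp, ?_⟩
      simp only [dcount, if_neg (by omega : ¬ b < a)]
      omega
    · have hne : a ≠ b := by
        have := List.nodup_cons.mp hnd
        exact fun h => this.1 (h ▸ List.mem_cons_self)
      have hba : b < a := by omega
      have hres := find_config (a :: b :: t).length (a :: b :: t) le_rfl hnd hlen
        (by
          rintro a' b' t₀ h
          obtain ⟨rfl, rfl, rfl⟩ := by simpa using h
          exact hba)
      rcases hres with ⟨u, x, y, heq, hxy⟩ | ⟨u, x, y, z, v, heq, hxy, hyz⟩ | hsh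
      · refine ⟨u ++ [x], ?_, ?_, ?_⟩
        · rw [heq]
          exact List.Sublist.append (List.Sublist.refl u)
            (List.Sublist.cons₂ x (List.nil_sublist _))
        · rw [heq]; simp
        · rw [heq]
          refine dcount_append u rfl ?_
          simp only [dcount, if_neg (by omega : ¬ y < x)]
      · refine ⟨u ++ ([x, z] ++ v), ?_, ?_, ?_⟩
        · rw [heq]
          exact List.Sublist.append (List.Sublist.refl u)
            (List.Sublist.append
              (List.Sublist.cons₂ x (List.Sublist.cons y (List.Sublist.refl [z])))
              (List.Sublist.refl v))
        · rw [heq]; simp; omega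
        · rw [heq]
          refine dcount_append u rfl ?_
          simp only [List.cons_append, dcount, if_neg (by omega : ¬ y < x),
            if_neg (by omega : ¬ z < y), if_neg (by omega : ¬ z < x)]
          omega
      · simp at hsh

end MPaux
/-- every minimal permutation with `d ≥ 1` descents has length `n` with
`d + 1 ≤ n ≤ 2d`; in particular `f_d(n) = 0` whenever `n < d + 1` or `n > 2d`. -/
theorem minimalPerm_length_bounds (d : ℕ) (hd : 1 ≤ d) :
    (∀ n w, IsPermWord n w → MinimalPerm d w → d + 1 ≤ n ∧ n ≤ 2 * d) ∧
      (∀ n, n < d + 1 ∨ 2 * d < n → fCount d n = 0) := by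
  have main : ∀ n w, IsPermWord n w → MinimalPerm d w → d + 1 ≤ n ∧ n ≤ 2 * d := by
    intro n w hperm hmin
    obtain ⟨hlen, hnd, hbd⟩ := hperm
    obtain ⟨hcard, hminimal⟩ := hmin
    have hdc : MPaux.dcount w = d := by rw [← MPaux.card_descents_eq_dcount, hcard]
    -- lower bound
    have hsub : descents w ⊆ Finset.Ico 1 w.length := by
      intro i hi
      rw [MPaux.mem_descents] at hi
      exact Finset.mem_Ico.mpr ⟨hi.2.1, hi.1⟩
    have hlow : d ≤ w.length - 1 := by
      have := Finset.card_le_card hsub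
      rwa [hcard, Nat.card_Ico] at this
    refine ⟨by omega, ?_⟩
    -- upper bound
    by_contra hup
    have hlen2 : 2 * MPaux.dcount w + 1 ≤ w.length := by omega
    have h2 : 2 ≤ w.length := by omega
    obtain ⟨s, hsubl, hslen, hsd⟩ := MPaux.exists_deletion hnd hlen2 h2
    have hsnd : s.Nodup := hsubl.nodup hnd
    refine hminimal s.length (MPaux.stdz s) (MPaux.stdz_perm hsnd) (by omega) ?_
      ⟨s, hsubl, MPaux.stdz_srel⟩
    rw [← MPaux.descents_eq_of_sameRelOrder (MPaux.stdz_srel (s := s)),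
      MPaux.card_descents_eq_dcount, hsd, hdc]
  refine ⟨main, fun n hn => ?_⟩
  have he : minimalPerms d n = ∅ := by
    refine Set.eq_empty_iff_forall_notMem.mpr fun w hw => ?_
    obtain ⟨h1, h2⟩ := hw
    have := main n w h1 h2
    omega
  rw [fCount, he, Set.ncard_empty]
end

section
/- Let π = π₁π₂⋯π_n be a minimal permutation with ascent sequence (a₁, a₂, …, a_k). Then a_i ≥ 2 for all 1 ≤ i ≤ k; equivalently, π has no two consecutive ascents, and π starts and ends with a descent. -/
/-! ### Auxiliary machinery for `ascentSeq_entries_ge_two` -/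

private def dA (x y : ℕ) : ℕ := if y < x then 1 else 0

private def dcount : List ℕ → ℕ
  | [] => 0
  | [_] => 0
  | a :: b :: t => dA a b + dcount (b :: t)

private lemma dcount_nil' : dcount [] = 0 := rfl
private lemma dcount_single (a : ℕ) : dcount [a] = 0 := rfl
private lemma dcount_cons₂ (a b : ℕ) (t : List ℕ) :
    dcount (a :: b :: t) = dA a b + dcount (b :: t) := rfl

private lemma dcount_split (u : List ℕ) (p : ℕ) (t : List ℕ) :
    dcount (u ++ p :: t) = dcount (u ++ [p]) + dcount (p :: t) := by
  induction u with
  | nil => simp [dcount_single]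
  | cons a u ih =>
    cases u with
    | nil => simp [dcount_cons₂, dcount_single]
    | cons b u' =>
      simp only [List.cons_append, dcount_cons₂] at ih ⊢
      omega

private lemma dcount_eq_sum (w : List ℕ) :
    dcount w = ∑ j ∈ Finset.range (w.length - 1),
      (if w.getD (j + 1) 0 < w.getD j 0 then 1 else 0) := by
  induction w with
  | nil => simp [dcount_nil']
  | cons a t ih =>
    cases t with
    | nil => simp [dcount_single]
    | cons b t' =>
      rw [dcount_cons₂, ih]
      have hlen : (a :: b :: t').length - 1 = ((b :: t').length - 1) + 1 := by
        simp
      rw [hlen, Finset.sum_range_succ']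
      simp only [List.getD_cons_succ, List.getD_cons_zero]
      have : (b :: t').length - 1 = t'.length := by simp
      rw [this]
      unfold dA
      omega

private lemma card_descents_eq_dcount (w : List ℕ) :
    (descents w).card = dcount w := by
  rw [dcount_eq_sum, ← Finset.card_filter]
  refine Finset.card_bij' (fun i _ => i - 1) (fun j _ => j + 1) ?hi ?hj ?li ?ri
  case hi =>
    intro i hi
    simp only [descents, Finset.mem_filter, Finset.mem_range] at hi; simp only [DescentAt] at hi
    obtain ⟨h0, h1, h2, h3⟩ := hi
    simp only [Finset.mem_filter, Finset.mem_range]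
    have hi1 : i - 1 + 1 = i := by omega
    rw [hi1]
    exact ⟨by omega, h3⟩
  case hj =>
    intro j hj
    simp only [Finset.mem_filter, Finset.mem_range] at hj
    simp only [descents, Finset.mem_filter, Finset.mem_range]; simp only [DescentAt]
    have : j + 1 - 1 = j := by omega
    rw [this]
    exact ⟨by omega, by omega, by omega, hj.2⟩
  case li =>
    intro i hi
    simp only [descents, Finset.mem_filter, Finset.mem_range] at hi; simp only [DescentAt] at hi
    show i - 1 + 1 = i
    omega
  case ri =>
    intro j _
    show j + 1 - 1 = j
    omega

private def rnk (s : List ℕ) (x : ℕ) : ℕ := (s.toFinset.filter (· < x)).card + 1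

private lemma rnk_lt_rnk {s : List ℕ} {x y : ℕ} (hx : x ∈ s) (hxy : x < y) :
    rnk s x < rnk s y := by
  have hsub : s.toFinset.filter (· < x) ⊆ s.toFinset.filter (· < y) := by
    intro z hz
    simp only [Finset.mem_filter] at hz ⊢
    exact ⟨hz.1, by omega⟩
  have hss : s.toFinset.filter (· < x) ⊂ s.toFinset.filter (· < y) := by
    rw [Finset.ssubset_iff_of_subset hsub]
    exact ⟨x, Finset.mem_filter.mpr ⟨List.mem_toFinset.mpr hx, hxy⟩,
      fun h => by simp at h⟩
  have := Finset.card_lt_card hss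
  unfold rnk
  omega

private lemma rnk_le {s : List ℕ} (hs : s.Nodup) {x : ℕ} (hx : x ∈ s) :
    rnk s x ≤ s.length := by
  have h1 : s.toFinset.filter (· < x) ⊆ s.toFinset.erase x := by
    intro z hz
    simp only [Finset.mem_filter] at hz
    exact Finset.mem_erase.mpr ⟨by omega, hz.1⟩
  have h2 := Finset.card_le_card h1
  rw [Finset.card_erase_of_mem (List.mem_toFinset.mpr hx),
    List.toFinset_card_of_nodup hs] at h2
  have h3 : 1 ≤ s.length := List.length_pos_iff.mpr (List.ne_nil_of_mem hx)
  unfold rnk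
  omega

private def std (s : List ℕ) : List ℕ := s.map (rnk s)

private lemma std_perm {s : List ℕ} (hs : s.Nodup) : IsPermWord s.length (std s) := by
  refine ⟨by simp [std], ?_, ?_⟩
  · refine List.Nodup.map_on ?_ hs
    intro x hx y hy hxy
    by_contra hne
    rcases Nat.lt_or_ge x y with h | h
    · exact absurd hxy (Nat.ne_of_lt (rnk_lt_rnk hx h))
    · exact absurd hxy.symm (Nat.ne_of_lt (rnk_lt_rnk hy (by omega)))
  · intro v hv
    simp only [std, List.mem_map] at hv
    obtain ⟨x, hx, rfl⟩ := hv
    exact ⟨Nat.le_add_left 1 _, rnk_le hs hx⟩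

private lemma std_relOrder (s : List ℕ) : SameRelOrder s (std s) := by
  refine ⟨by simp [std], ?_⟩
  intro p q hp hq
  have hp' : p < (std s).length := by simpa [std] using hp
  have hq' : q < (std s).length := by simpa [std] using hq
  rw [List.getD_eq_getElem _ _ hp, List.getD_eq_getElem _ _ hq,
    List.getD_eq_getElem _ _ hp', List.getD_eq_getElem _ _ hq']
  simp only [std, List.getElem_map]
  constructor
  · exact fun h => rnk_lt_rnk (s.getElem_mem _) h
  · intro h
    by_contra hle
    rcases Nat.lt_or_ge s[q] s[p] with h2 | h2
    · exact absurd h (Nat.lt_asymm (rnk_lt_rnk (s.getElem_mem _) h2))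
    · have hpq : s[p] = s[q] := by omega
      rw [hpq] at h
      exact Nat.lt_irrefl _ h

private lemma SameRelOrder.descents_eq {u v : List ℕ} (h : SameRelOrder u v) :
    descents u = descents v := by
  obtain ⟨hlen, hrel⟩ := h
  ext i
  simp only [descents, Finset.mem_filter, Finset.mem_range, ← hlen]; simp only [DescentAt, ← hlen]
  constructor
  · rintro ⟨h1, h2, h3, h4⟩
    exact ⟨h1, h2, h3, (hrel i (i - 1) (by omega) (by omega)).mp h4⟩
  · rintro ⟨h1, h2, h3, h4⟩
    exact ⟨h1, h2, h3, (hrel i (i - 1) (by omega) (by omega)).mpr h4⟩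

private lemma del_contra {w s : List ℕ} (hnd : w.Nodup)
    (hmin : IsMinimal w) (hsub : s.Sublist w) (hlen : s.length < w.length)
    (hdc : dcount s = dcount w) : False := by
  have hsnd : s.Nodup := hsub.nodup hnd
  have hrel := std_relOrder s
  have hcard : (descents (std s)).card = (descents w).card := by
    rw [← hrel.descents_eq, card_descents_eq_dcount, card_descents_eq_dcount, hdc]
  exact hmin.2 s.length (std s) (std_perm hsnd) hlen hcard ⟨s, hsub, hrel⟩

private lemma ascentAt_iff {w : List ℕ} {j : ℕ} (hb : j + 1 < w.length) :
    AscentAt w (j + 1) ↔ w[j] < w[j + 1] := by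
  unfold AscentAt
  rw [List.getD_eq_getElem _ _ hb]
  have h1 : j + 1 - 1 = j := by omega
  rw [h1, List.getD_eq_getElem _ _ (by omega)]
  exact ⟨fun h => h.2.2, fun h => ⟨by omega, by omega, h⟩⟩

private lemma descentAt_iff {w : List ℕ} {j : ℕ} (hb : j + 1 < w.length) :
    DescentAt w (j + 1) ↔ w[j + 1] < w[j] := by
  unfold DescentAt
  rw [List.getD_eq_getElem _ _ hb]
  have h1 : j + 1 - 1 = j := by omega
  rw [h1, List.getD_eq_getElem _ _ (by omega)]
  exact ⟨fun h => h.2.2, fun h => ⟨by omega, by omega, h⟩⟩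

private lemma dA_eq_zero {p q : ℕ} (h : p < q) : dA p q = 0 := by
  unfold dA
  rw [if_neg (by omega)]

private lemma del_mid {w u v : List ℕ} {p x q : ℕ} (hnd : w.Nodup) (hmin : IsMinimal w)
    (hw : w = u ++ p :: x :: q :: v) (hpx : p < x) (hxq : x < q) : False := by
  apply del_contra (s := u ++ p :: q :: v) hnd hmin
  · rw [hw]
    exact List.Sublist.append_left
      (List.Sublist.cons₂ p (List.Sublist.cons x (List.Sublist.refl (q :: v)))) u
  · rw [hw]; simp
  · rw [hw, dcount_split u p (q :: v), dcount_split u p (x :: q :: v)]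
    simp only [dcount_cons₂, dA_eq_zero hpx, dA_eq_zero hxq, dA_eq_zero (hpx.trans hxq)]
    omega

private lemma del_left {w v : List ℕ} {p x : ℕ} (hnd : w.Nodup) (hmin : IsMinimal w)
    (hw : w = p :: x :: v) (hpx : p < x) : False := by
  apply del_contra (s := x :: v) hnd hmin
  · rw [hw]; exact List.Sublist.cons p (List.Sublist.refl _)
  · rw [hw]; simp
  · rw [hw, dcount_cons₂, dA_eq_zero hpx]
    omega

private lemma del_right {w u : List ℕ} {p q : ℕ} (hnd : w.Nodup) (hmin : IsMinimal w)
    (hw : w = u ++ [p, q]) (hpq : p < q) : False := by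
  apply del_contra (s := u ++ [p]) hnd hmin
  · rw [hw]
    exact List.Sublist.append_left (List.Sublist.cons₂ p (List.nil_sublist [q])) u
  · rw [hw]; simp
  · rw [hw, dcount_split u p [q], dcount_cons₂, dcount_single, dA_eq_zero hpq]
    omega

private lemma sum_take_succ (l : List ℕ) (t : ℕ) (ht : t < l.length) :
    (l.take (t + 1)).sum = (l.take t).sum + l[t] := by
  rw [List.take_succ, List.getElem?_eq_getElem ht]
  simp only [Option.toList_some, List.sum_append, List.sum_cons, List.sum_nil]
  omega

private lemma junction_ascent {w : List ℕ} {bs : List (List ℕ)}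
    (hflat : bs.flatten = w)
    (hne : ∀ b ∈ bs, b ≠ [])
    (hch : List.Chain' (fun b c => ∃ x ∈ b.getLast?, ∃ y ∈ c.head?, x < y) bs)
    {j : ℕ} (hj : j + 1 < bs.length) :
    AscentAt w (((bs.map List.length).take (j + 1)).sum) := by
  have hrel := List.isChain_iff_getElem.mp hch j (by omega)
  obtain ⟨x, hx, y, hy, hxy⟩ := hrel
  rw [Option.mem_def, List.getLast?_eq_some_iff] at hx
  obtain ⟨c, hc⟩ := hx
  rw [Option.mem_def, List.head?_eq_some_iff] at hy
  obtain ⟨d, hd⟩ := hy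
  -- decompose bs
  have hbs : bs = bs.take j ++ bs[j] :: bs[j + 1] :: bs.drop (j + 2) := by
    have h0 := List.take_append_drop j bs
    rw [List.drop_eq_getElem_cons (show j < bs.length by omega),
      List.drop_eq_getElem_cons (show j + 1 < bs.length from hj)] at h0
    exact h0.symm
  have hwdec : w = ((bs.take j).flatten ++ c) ++
      x :: y :: (d ++ (bs.drop (j + 2)).flatten) := by
    rw [← hflat]
    conv_lhs => rw [hbs]
    simp [hc, hd]
  -- the junction position
  have hP : ((bs.map List.length).take (j + 1)).sum =
      ((bs.take j).flatten ++ c).length + 1 := by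
    rw [sum_take_succ _ j (by simpa using (show j < bs.length by omega))]
    have h2 : ((bs.map List.length).take j).sum = (bs.take j).flatten.length := by
      rw [List.length_flatten, List.map_take]
    have h3 : (bs.map List.length)[j]'(by simpa using (show j < bs.length by omega))
        = c.length + 1 := by
      rw [List.getElem_map, hc]
      simp
    rw [h2, h3, List.length_append]
    omega
  refine ⟨by omega, ?_, ?_⟩
  · rw [hwdec, hP]
    simp only [List.length_append, List.length_cons]
    omega
  · rw [hP]
    have e1 : w.getD (((bs.take j).flatten ++ c).length + 1 - 1) 0 = x := by
      rw [hwdec, List.getD_append_right _ _ _ _ (by omega)]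
      have : ((bs.take j).flatten ++ c).length + 1 - 1
          - ((bs.take j).flatten ++ c).length = 0 := by omega
      rw [this]
      rfl
    have e2 : w.getD (((bs.take j).flatten ++ c).length + 1) 0 = y := by
      rw [hwdec, List.getD_append_right _ _ _ _ (by omega)]
      have : ((bs.take j).flatten ++ c).length + 1
          - ((bs.take j).flatten ++ c).length = 1 := by omega
      rw [this]
      rfl
    rw [e1, e2]
    exact hxy

/-- if `w` is a minimal permutation (with at least one descent) having
ascent sequence `a = (a₁,…,a_k)`, then every `aᵢ ≥ 2`; equivalently, `w` has no two
consecutive ascents and starts and ends with a descent. -/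
theorem ascentSeq_entries_ge_two (n : ℕ) (w a : List ℕ) (hw : IsPermWord n w)
    (hmin : IsMinimal w) (hd : 1 ≤ (descents w).card) (ha : HasAscentSeq w a) :
    (∀ x ∈ a, 2 ≤ x) ∧ (∀ i, AscentAt w i → ¬ AscentAt w (i + 1)) ∧
      DescentAt w 1 ∧ DescentAt w (w.length - 1) := by
  have hnd : w.Nodup := hw.2.1
  have hlen2 : 2 ≤ w.length := by
    obtain ⟨i, hi⟩ := Finset.card_pos.mp hd
    simp only [descents, Finset.mem_filter, Finset.mem_range] at hi; simp only [DescentAt] at hi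
    omega
  have key2 : ∀ i, AscentAt w i → ¬ AscentAt w (i + 1) := by
    intro i h1 h2
    have hi1 := h1.1
    obtain ⟨j, rfl⟩ : ∃ j, i = j + 1 := ⟨i - 1, by omega⟩
    have hb2 : j + 1 + 1 + 1 ≤ w.length := h2.2.1
    have hpx : w[j] < w[j + 1] := (ascentAt_iff (by omega)).mp h1
    have hxq : w[j + 1] < w[j + 1 + 1] := (ascentAt_iff (by omega)).mp h2
    have h0 := List.take_append_drop j w
    rw [List.drop_eq_getElem_cons (show j < w.length by omega)] at h0
    rw [List.drop_eq_getElem_cons (show j + 1 < w.length by omega)] at h0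
    rw [List.drop_eq_getElem_cons (show j + 1 + 1 < w.length by omega)] at h0
    exact del_mid hnd hmin h0.symm hpx hxq
  have key3a : DescentAt w 1 := by
    by_contra hnda
    have hb0 : 0 < w.length := by omega
    have hb1 : 0 + 1 < w.length := by omega
    have hne01 : w[0]'hb0 ≠ w[0 + 1]'hb1 := by
      intro h
      have := hnd.getElem_inj_iff.mp h
      omega
    have hnlt : ¬ (w[0 + 1]'hb1 < w[0]'hb0) := by
      intro hlt
      exact hnda ((descentAt_iff hb1).mpr hlt)
    have hasc : w[0]'hb0 < w[0 + 1]'hb1 := by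
      rcases Nat.lt_trichotomy (w[0]'hb0) (w[0 + 1]'hb1) with h | h | h
      · exact h
      · exact absurd h hne01
      · exact absurd h hnlt
    have h0 := List.drop_eq_getElem_cons hb0
    rw [List.drop_eq_getElem_cons hb1] at h0
    rw [List.drop_zero] at h0
    exact del_left hnd hmin h0 hasc
  have key3b : DescentAt w (w.length - 1) := by
    by_contra hndb
    obtain ⟨j, hj⟩ : ∃ j, w.length = j + 2 := ⟨w.length - 2, by omega⟩
    have hb0 : j < w.length := by omega
    have hb1 : j + 1 < w.length := by omega
    have hne' : w[j]'hb0 ≠ w[j + 1]'hb1 := by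
      intro h
      have := hnd.getElem_inj_iff.mp h
      omega
    have hnlt : ¬ (w[j + 1]'hb1 < w[j]'hb0) := by
      intro hlt
      apply hndb
      have he : w.length - 1 = j + 1 := by omega
      rw [he]
      exact (descentAt_iff hb1).mpr hlt
    have hasc : w[j]'hb0 < w[j + 1]'hb1 := by
      rcases Nat.lt_trichotomy (w[j]'hb0) (w[j + 1]'hb1) with h | h | h
      · exact h
      · exact absurd h hne'
      · exact absurd h hnlt
    have h0 := List.take_append_drop j w
    rw [List.drop_eq_getElem_cons hb0] at h0
    rw [List.drop_eq_getElem_cons hb1] at h0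
    rw [List.drop_eq_nil_of_le (show w.length ≤ j + 1 + 1 by omega)] at h0
    exact del_right hnd hmin h0.symm hasc
  refine ⟨?_, key2, key3a, key3b⟩
  obtain ⟨bs, hflat, hmap, hprop, hch⟩ := ha
  intro z hz
  by_contra h2
  rw [← hmap] at hz
  obtain ⟨j, hjlt, hjz⟩ := List.getElem_of_mem hz
  have hk : j < bs.length := by simpa using hjlt
  have hb1 : bs[j].length = 1 := by
    have h3 : bs[j].length = z := by
      rw [List.getElem_map] at hjz
      exact hjz
    have h4 : bs[j] ≠ [] := (hprop _ (List.getElem_mem hk)).1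
    have h5 : 0 < bs[j].length := List.length_pos_iff.mpr h4
    omega
  have hne' : ∀ b ∈ bs, b ≠ [] := fun b hb => (hprop b hb).1
  have hsum : (bs.map List.length).sum = w.length := by
    rw [← hflat, List.length_flatten]
  have hSstep : ((bs.map List.length).take (j + 1)).sum
      = ((bs.map List.length).take j).sum + 1 := by
    rw [sum_take_succ _ j (by simpa using hk), List.getElem_map, hb1]
  by_cases hjtop : j + 1 < bs.length
  · have asc2 := junction_ascent hflat hne' hch hjtop
    rw [hSstep] at asc2
    by_cases hj0 : j = 0
    · subst hj0
      simp only [List.take_zero, List.sum_nil, Nat.zero_add] at asc2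
      exact Nat.lt_asymm asc2.2.2 key3a.2.2
    · have asc1 := junction_ascent hflat hne' hch (show (j - 1) + 1 < bs.length by omega)
      rw [show j - 1 + 1 = j from by omega] at asc1
      exact key2 _ asc1 asc2
  · have hjeq : j + 1 = bs.length := by omega
    have hlast : ((bs.map List.length).take (j + 1)).sum = w.length := by
      rw [← hsum]
      congr 1
      exact List.take_of_length_le (by simp [← hjeq])
    by_cases hj0 : j = 0
    · have hone : w.length = 1 := by
        rw [← hlast, hSstep, hj0]
        simp
      omega
    · have asc1 := junction_ascent hflat hne' hch (show (j - 1) + 1 < bs.length by omega)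
      rw [show j - 1 + 1 = j from by omega] at asc1
      rw [show ((bs.map List.length).take j).sum = w.length - 1 from by omega] at asc1
      exact Nat.lt_asymm asc1.2.2 key3b.2.2
end

section
/- Let (a₁, a₂, …, a_k) be a sequence of positive integers with a₁ + a₂ + ⋯ + a_k = n and a_i ≥ 2 for all i. Then there is a bijection between the set 𝓕_{a₁,…,a_k}(n) of minimal permutations of length n with ascent sequence (a₁,…,a_k) and the set 𝓟_{a₁,…,a_k}(n) of 2-regular skew tableaux with column lengths a₁,…,a_k; in particular these two sets have the same cardinality. -/
namespace TwoRegAux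

/-! ### Descent counting -/

def desCount : List ℕ → ℕ
  | x :: y :: l => (if y < x then 1 else 0) + desCount (y :: l)
  | _ => 0

@[simp] lemma desCount_nil : desCount [] = 0 := rfl
@[simp] lemma desCount_singleton (x : ℕ) : desCount [x] = 0 := rfl
lemma desCount_cons_cons (x y : ℕ) (l : List ℕ) :
    desCount (x :: y :: l) = (if y < x then 1 else 0) + desCount (y :: l) := rfl

lemma descents_card_cons_cons (x y : ℕ) (l : List ℕ) :
    (descents (x :: y :: l)).card = (if y < x then 1 else 0) + (descents (y :: l)).card := by
  classical
  have himg : descents (x :: y :: l)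
      = (if y < x then ({1} : Finset ℕ) else ∅) ∪ (descents (y :: l)).image (· + 1) := by
    ext i
    simp only [descents, Finset.mem_filter, Finset.mem_range, Finset.mem_union,
      Finset.mem_image]
    simp only [DescentAt]
    constructor
    · rintro ⟨hi1, hi2, hi3, hi4⟩
      match i, hi2 with
      | 1, _ =>
          left
          have hyx : y < x := by simpa using hi4
          simp [hyx]
      | (j+2), _ =>
          right
          refine ⟨j + 1, ⟨?_, ?_, ?_, ?_⟩, rfl⟩
          · simp only [List.length_cons] at hi1 ⊢; omega
          · omega
          · simp only [List.length_cons] at hi3 ⊢; omega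
          · simpa using hi4
    · rintro (h | ⟨j, ⟨hj1, hj2, hj3, hj4⟩, rfl⟩)
      · split_ifs at h with hyx
        · simp only [Finset.mem_singleton] at h
          subst h
          refine ⟨by simp only [List.length_cons]; omega, by omega, by simp only [List.length_cons]; omega, by simpa using hyx⟩
        · simp at h
      · refine ⟨?_, by omega, ?_, ?_⟩
        · simp only [List.length_cons] at hj1 ⊢; omega
        · simp only [List.length_cons] at hj3 ⊢; omega
        · match j, hj2 with
          | (j'+1), _ => simpa using hj4
  rw [himg, Finset.card_union_of_disjoint, Finset.card_image_of_injective _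
    (fun p q h => by omega)]
  · split_ifs <;> simp
  · split_ifs with h
    · simp only [Finset.disjoint_singleton_left, Finset.mem_image, not_exists]
      rintro j hj
      simp only [descents, Finset.mem_filter] at hj
      simp only [DescentAt] at hj
      omega
    · simp

lemma descents_card_eq_desCount (w : List ℕ) : (descents w).card = desCount w := by
  induction w with
  | nil => simp [descents]
  | cons x l ih =>
    cases l with
    | nil =>
        simp only [desCount_singleton]
        rw [Finset.card_eq_zero]
        ext i
        simp only [descents, Finset.mem_filter, Finset.mem_range,
          Finset.notMem_empty, iff_false, List.length_singleton]
        simp only [DescentAt]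
        rintro ⟨h1, h2, h3, _⟩
        omega
    | cons y l' =>
        rw [descents_card_cons_cons, desCount_cons_cons, ih]

/-! ### junction counting and append lemma -/

def jn (u v : List ℕ) : ℕ :=
  match u.getLast?, v.head? with
  | some x, some y => if y < x then 1 else 0
  | _, _ => 0

@[simp] lemma jn_nil_left (v : List ℕ) : jn [] v = 0 := rfl
@[simp] lemma jn_nil_right (u : List ℕ) : jn u [] = 0 := by
  simp only [jn]
  cases u.getLast? <;> rfl

lemma jn_le_one (u v : List ℕ) : jn u v ≤ 1 := by
  simp only [jn]
  cases u.getLast? <;> cases v.head? <;> simp <;> split_ifs <;> simp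

lemma jn_single_cons (x y : ℕ) (l : List ℕ) :
    jn [x] (y :: l) = if y < x then 1 else 0 := rfl

lemma desCount_cons (x : ℕ) (l : List ℕ) :
    desCount (x :: l) = jn [x] l + desCount l := by
  cases l with
  | nil => rfl
  | cons y l' =>
      rw [desCount_cons_cons, jn_single_cons]

lemma desCount_append (u v : List ℕ) :
    desCount (u ++ v) = desCount u + desCount v + jn u v := by
  induction u with
  | nil => simp
  | cons x u' ih =>
    cases u' with
    | nil =>
        rw [List.singleton_append, desCount_cons x v, desCount_singleton]
        omega
    | cons y u'' =>
        have hgl : (x :: y :: u'').getLast? = (y :: u'').getLast? := by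
          simp [List.getLast?_cons_cons]
        have hjn : jn (x :: y :: u'') v = jn (y :: u'') v := by
          simp only [jn, hgl]
        have ih' : desCount (y :: (u'' ++ v))
            = desCount (y :: u'') + desCount v + jn (y :: u'') v := by
          simpa using ih
        have h1 : desCount ((x :: y :: u'') ++ v)
            = (if y < x then 1 else 0) + desCount (y :: (u'' ++ v)) := rfl
        have h2 : desCount (x :: y :: u'')
            = (if y < x then 1 else 0) + desCount (y :: u'') := rfl
        rw [h1, h2, ih', hjn]
        omega

lemma desCount_le_cons (x : ℕ) (l : List ℕ) : desCount l ≤ desCount (x :: l) := by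
  rw [desCount_cons]; omega

/-- key monotonicity: `desCount (x :: s) ≤ desCount (x :: w)` for `s <+ w`. -/
lemma desCount_cons_le_of_sublist {s w : List ℕ} (h : s.Sublist w) :
    ∀ x, desCount (x :: s) ≤ desCount (x :: w) := by
  induction h with
  | slnil => intro x; exact le_refl _
  | @cons s w b h ih =>
      intro x
      cases s with
      | nil =>
          simp only [desCount_singleton]
          exact Nat.zero_le _
      | cons c s' =>
          have h1 := ih b
          rw [desCount_cons_cons] at h1
          rw [desCount_cons_cons, desCount_cons_cons x b w]
          by_cases h2 : c < x <;> by_cases h3 : b < x <;> by_cases h4 : c < b <;>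
            simp only [h2, h3, h4, if_true, if_false] <;>
            simp only [h4, if_true, if_false] at h1 <;> omega
  | @cons_cons s w b h ih =>
      intro x
      rw [desCount_cons_cons, desCount_cons_cons]
      exact Nat.add_le_add_left (ih b) _

lemma desCount_le_of_sublist {s w : List ℕ} (h : s.Sublist w) :
    desCount s ≤ desCount w := by
  induction h with
  | slnil => exact le_refl _
  | @cons s w b h ih => exact le_trans ih (desCount_le_cons b w)
  | @cons_cons s w b h ih => exact desCount_cons_le_of_sublist h b

lemma sublist_factor {s w : List ℕ} (h : s.Sublist w) (hlt : s.length < w.length) :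
    ∃ u x v, w = u ++ x :: v ∧ s.Sublist (u ++ v) := by
  induction h with
  | slnil => simp at hlt
  | @cons s w b h ih => exact ⟨[], b, w, rfl, h⟩
  | @cons_cons s w b h ih =>
      have : s.length < w.length := by simpa using hlt
      obtain ⟨u, x, v, rfl, hs⟩ := ih this
      exact ⟨b :: u, x, v, rfl, by simpa using hs.cons₂ b⟩

end TwoRegAux
namespace TwoRegAux

lemma descents_eq_of_sameRelOrder {s t : List ℕ} (h : SameRelOrder s t) :
    descents s = descents t := by
  obtain ⟨hlen, hcmp⟩ := h
  ext i
  simp only [descents, Finset.mem_filter, Finset.mem_range, hlen]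
  simp only [DescentAt, hlen]
  constructor
  · rintro ⟨hi1, hi2, hi3, hi4⟩
    exact ⟨hi1, hi2, hi3, (hcmp i (i-1) (by omega) (by omega)).mp hi4⟩
  · rintro ⟨hi1, hi2, hi3, hi4⟩
    exact ⟨hi1, hi2, hi3, (hcmp i (i-1) (by omega) (by omega)).mpr hi4⟩

/-! ### Standardization -/

def rank (s : List ℕ) (x : ℕ) : ℕ := s.countP (fun z => z ≤ x)

lemma rank_pos {s : List ℕ} {x : ℕ} (hx : x ∈ s) : 1 ≤ rank s x := by
  have : 0 < rank s x := List.countP_pos_iff.mpr ⟨x, hx, by simp⟩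
  omega

lemma rank_le_length (s : List ℕ) (x : ℕ) : rank s x ≤ s.length :=
  List.countP_le_length

lemma rank_lt_rank {s : List ℕ} {x y : ℕ} (hy : y ∈ s) (hxy : x < y) :
    rank s x < rank s y := by
  obtain ⟨u, v, rfl⟩ := List.append_of_mem hy
  simp only [rank, List.countP_append, List.countP_cons]
  have h1 : u.countP (fun z => z ≤ x) ≤ u.countP (fun z => z ≤ y) :=
    List.countP_mono_left (fun a _ ha => by simp at ha ⊢; omega)
  have h2 : v.countP (fun z => z ≤ x) ≤ v.countP (fun z => z ≤ y) :=
    List.countP_mono_left (fun a _ ha => by simp at ha ⊢; omega)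
  have h3 : (if (y:ℕ) ≤ x then 1 else 0) = 0 := by simp; omega
  have h4 : (if (y:ℕ) ≤ y then 1 else 0) = 1 := by simp
  simp only [decide_eq_true_eq]
  rw [if_pos (le_refl y), if_neg (by omega)]
  omega

lemma rank_lt_iff {s : List ℕ} {x y : ℕ} (hx : x ∈ s) (hy : y ∈ s) :
    x < y ↔ rank s x < rank s y := by
  constructor
  · exact fun h => rank_lt_rank hy h
  · intro h
    by_contra hxy
    rcases Nat.lt_or_ge y x with h' | h'
    · exact absurd (rank_lt_rank hx h') (by omega)
    · have : x = y := by omega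
      subst this; omega

lemma getD_mem {s : List ℕ} {p : ℕ} (hp : p < s.length) : s.getD p 0 ∈ s := by
  rw [List.getD_eq_getElem _ _ hp]; exact List.getElem_mem _

def std (s : List ℕ) : List ℕ := s.map (rank s)

@[simp] lemma std_length (s : List ℕ) : (std s).length = s.length := by
  simp [std]

lemma std_getD {s : List ℕ} {p : ℕ} (hp : p < s.length) :
    (std s).getD p 0 = rank s (s.getD p 0) := by
  rw [List.getD_eq_getElem _ _ (by simpa using hp), List.getD_eq_getElem _ _ hp]
  simp [std]

lemma sameRelOrder_std (s : List ℕ) : SameRelOrder s (std s) := by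
  refine ⟨(std_length s).symm, fun p q hp hq => ?_⟩
  rw [std_getD hp, std_getD hq]
  exact rank_lt_iff (getD_mem hp) (getD_mem hq)

lemma isPermWord_std {s : List ℕ} (hs : s.Nodup) : IsPermWord s.length (std s) := by
  refine ⟨std_length s, ?_, ?_⟩
  · refine hs.map_on ?_
    intro x hx y hy hxy
    by_contra hne
    rcases Nat.lt_or_ge x y with h | h
    · exact absurd hxy (by have := rank_lt_rank hy h; omega)
    · have h' : y < x := by omega
      exact absurd hxy (by have := rank_lt_rank hx h'; omega)
  · intro v hv
    simp only [std, List.mem_map] at hv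
    obtain ⟨x, hx, rfl⟩ := hv
    exact ⟨rank_pos hx, rank_le_length s x⟩

end TwoRegAux
namespace TwoRegAux

def off (a : List ℕ) (c : ℕ) : ℕ := (a.take c).sum
def ac (a : List ℕ) (c : ℕ) : ℕ := a.getD c 0
def rho (a : List ℕ) (c : ℕ) : ℕ := colTop a c + ac a c - 1

@[simp] lemma off_zero (a : List ℕ) : off a 0 = 0 := rfl

lemma off_succ (a : List ℕ) (c : ℕ) : off a (c + 1) = off a c + ac a c := by
  simp only [off, List.take_succ, List.sum_append, ac, List.getD_eq_getElem?_getD]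
  cases h : a[c]? <;> simp

lemma off_mono (a : List ℕ) {c c' : ℕ} (h : c ≤ c') : off a c ≤ off a c' := by
  induction c' with
  | zero =>
      have : c = 0 := by omega
      subst this; exact le_refl _
  | succ m ih =>
      rcases Nat.eq_or_lt_of_le h with rfl | h'
      · exact le_refl _
      · exact le_trans (ih (by omega)) (by rw [off_succ]; omega)

lemma off_le_sum (a : List ℕ) (c : ℕ) : off a c ≤ a.sum := by
  have := List.sum_take_add_sum_drop a c
  simp only [off]; omega

lemma off_length (a : List ℕ) : off a a.length = a.sum := by
  simp [off]

lemma off_eq_sum_of_ge (a : List ℕ) {c : ℕ} (h : a.length ≤ c) : off a c = a.sum := by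
  simp [off, List.take_of_length_le h]

lemma ac_ge_two {a : List ℕ} (h2 : ∀ x ∈ a, 2 ≤ x) {c : ℕ} (hc : c < a.length) :
    2 ≤ ac a c := by
  rw [ac, List.getD_eq_getElem _ _ hc]
  exact h2 _ (List.getElem_mem _)

lemma off_add_ac_le (a : List ℕ) {c : ℕ} (hc : c < a.length) :
    off a c + ac a c ≤ a.sum := by
  rw [← off_succ]
  exact off_le_sum a (c + 1)

lemma pos_inj (a : List ℕ) {c c' j j' : ℕ} (hc : c < a.length) (hc' : c' < a.length)
    (hj : j < ac a c) (hj' : j' < ac a c') (heq : off a c + j = off a c' + j') :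
    c = c' ∧ j = j' := by
  rcases lt_trichotomy c c' with h | h | h
  · have h1 : off a c + ac a c ≤ off a c' := by rw [← off_succ]; exact off_mono a h
    omega
  · subst h; omega
  · have h1 : off a c' + ac a c' ≤ off a c := by rw [← off_succ]; exact off_mono a h
    omega

lemma posDecomp (a : List ℕ) {p : ℕ} (hp : p < a.sum) :
    ∃ c, c < a.length ∧ ∃ j, j < ac a c ∧ p = off a c + j := by
  induction a generalizing p with
  | nil => simp at hp
  | cons x a' ih =>
      simp only [List.sum_cons] at hp
      by_cases h : p < x
      · exact ⟨0, by simp, p, by simpa [ac] using h, by simp [off]⟩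
      · obtain ⟨c, hc, j, hj, heq⟩ := ih (p := p - x) (by omega)
        refine ⟨c + 1, by simpa using hc, j, by simpa [ac] using hj, ?_⟩
        have : off (x :: a') (c + 1) = x + off a' c := by
          simp [off, List.take_succ_cons]
        omega

lemma two_mul_length_le_sum {a : List ℕ} (h2 : ∀ x ∈ a, 2 ≤ x) :
    2 * a.length ≤ a.sum := by
  induction a with
  | nil => simp
  | cons x a' ih =>
      simp only [List.length_cons, List.sum_cons]
      have := h2 x (by simp)
      have := ih (fun y hy => h2 y (by simp [hy]))
      omega

lemma colTop_spec {a : List ℕ} (h2 : ∀ x ∈ a, 2 ≤ x) {c : ℕ} (hc : c < a.length) :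
    colTop a c + 2 * (a.length - 1 - c) = (a.drop (c + 1)).sum := by
  have h1 : 2 * (a.drop (c + 1)).length ≤ (a.drop (c + 1)).sum :=
    two_mul_length_le_sum (fun y hy => h2 y (List.mem_of_mem_drop hy))
  rw [List.length_drop] at h1
  simp only [colTop]
  omega

lemma colTop_succ {a : List ℕ} (h2 : ∀ x ∈ a, 2 ≤ x) {c : ℕ} (hc : c + 1 < a.length) :
    colTop a (c + 1) + ac a (c + 1) = colTop a c + 2 := by
  have e1 := colTop_spec h2 (show c < a.length by omega)
  have e2 := colTop_spec h2 hc
  have e3 : a.drop (c + 1) = a[c+1] :: a.drop (c + 2) := List.drop_eq_getElem_cons hc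
  have e4 : ac a (c + 1) = a[c+1] := List.getD_eq_getElem _ _ hc
  have e5 : 2 ≤ ac a (c + 1) := ac_ge_two h2 hc
  rw [e3] at e1
  simp only [List.sum_cons] at e1
  rw [show c + 1 + 1 = c + 2 from rfl] at e2
  omega

/-! ### flatten indexing -/

lemma flatten_getD (bs : List (List ℕ)) :
    ∀ c j, c < bs.length → j < (bs.getD c []).length →
    bs.flatten.getD (((bs.take c).map List.length).sum + j) 0 = (bs.getD c []).getD j 0 := by
  induction bs with
  | nil => intro c j hc; simp at hc
  | cons b bs' ih =>
      intro c j hc hj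
      cases c with
      | zero =>
          simp only [List.take_zero, List.map_nil, List.sum_nil, Nat.zero_add,
            List.flatten_cons, List.getD_cons_zero] at hj ⊢
          exact List.getD_append _ _ _ _ hj
      | succ c' =>
          simp only [List.take_succ_cons, List.map_cons, List.sum_cons, List.flatten_cons,
            List.getD_cons_succ] at hj ⊢
          rw [List.getD_append_right _ _ _ _ (by omega)]
          have : b.length + ((bs'.take c').map List.length).sum + j - b.length
              = ((bs'.take c').map List.length).sum + j := by omega
          rw [this]
          exact ih c' j (by simpa using hc) hj

lemma flatten_getD' {a : List ℕ} {bs : List (List ℕ)} (hmap : bs.map List.length = a)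
    {c j : ℕ} (hc : c < a.length) (hj : j < ac a c) :
    bs.flatten.getD (off a c + j) 0 = (bs.getD c []).getD j 0 := by
  subst hmap
  have hlen : bs.length = (bs.map List.length).length := by simp
  have hc' : c < bs.length := by omega
  have hget : (bs.getD c []).length = ac (bs.map List.length) c := by
    rw [List.getD_eq_getElem _ _ hc', ac,
      List.getD_eq_getElem _ _ hc]
    simp
  have htake : ((bs.take c).map List.length).sum = off (bs.map List.length) c := by
    simp [off, List.map_take]
  rw [← htake]
  exact flatten_getD bs c j hc' (by omega)

end TwoRegAux
namespace TwoRegAux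

lemma jn_eq_of {u v : List ℕ} {l h : ℕ} (hu : u.getLast? = some l) (hv : v.head? = some h) :
    jn u v = if h < l then 1 else 0 := by
  simp [jn, hu, hv]

lemma getLast?_eq_getD {u : List ℕ} (hu : u ≠ []) :
    u.getLast? = some (u.getD (u.length - 1) 0) := by
  have h1 : u.length - 1 < u.length := by
    have := List.length_pos_iff.mpr hu; omega
  rw [List.getLast?_eq_getElem?, List.getElem?_eq_getElem h1, List.getD_eq_getElem _ _ h1]

lemma head?_eq_getD {v : List ℕ} (hv : v ≠ []) :
    v.head? = some (v.getD 0 0) := by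
  have h1 : 0 < v.length := List.length_pos_iff.mpr hv
  rw [List.head?_eq_getElem?, List.getElem?_eq_getElem h1, List.getD_eq_getElem _ _ h1]

lemma split_getLast? {w u : List ℕ} {x : ℕ} {v : List ℕ} (hw : w = u ++ x :: v)
    (hu : u ≠ []) : u.getLast? = some (w.getD (u.length - 1) 0) := by
  have h1 : u.length - 1 < u.length := by
    have := List.length_pos_iff.mpr hu; omega
  rw [getLast?_eq_getD hu, hw, List.getD_append _ _ _ _ h1]

lemma split_head? {w u : List ℕ} {x : ℕ} {v : List ℕ} (hw : w = u ++ x :: v)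
    (hv : v ≠ []) : v.head? = some (w.getD (u.length + 1) 0) := by
  rw [head?_eq_getD hv, hw, List.getD_append_right _ _ _ _ (by omega)]
  have : u.length + 1 - u.length = 1 := by omega
  rw [this, List.getD_cons_succ]

lemma split_mid {w u : List ℕ} {x : ℕ} {v : List ℕ} (hw : w = u ++ x :: v) :
    x = w.getD u.length 0 := by
  rw [hw, List.getD_append_right _ _ _ _ (le_refl _), Nat.sub_self, List.getD_cons_zero]

lemma desCount_erase_lt {a : List ℕ} (h2 : ∀ x ∈ a, 2 ≤ x) {w : List ℕ}
    (hlen : w.length = a.sum)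
    (W1 : ∀ c, c < a.length → ∀ j, j + 1 < ac a c →
      w.getD (off a c + j + 1) 0 < w.getD (off a c + j) 0)
    (W2 : ∀ c, c + 1 < a.length →
      w.getD (off a c + ac a c - 1) 0 < w.getD (off a (c + 1) + 1) 0)
    (W3 : ∀ c, c + 1 < a.length →
      w.getD (off a c + ac a c - 2) 0 < w.getD (off a (c + 1)) 0) :
    ∀ u x v, w = u ++ x :: v → desCount (u ++ v) < desCount w := by
  intro u x v hw
  have hp : u.length < w.length := by
    rw [hw]; simp only [List.length_append, List.length_cons]; omega
  have hlenw : w.length = u.length + 1 + v.length := by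
    rw [hw]; simp only [List.length_append, List.length_cons]; omega
  obtain ⟨c, hck, j, hj, hpeq⟩ := posDecomp a (hlen ▸ hp)
  have hac := ac_ge_two h2 hck
  have hx : x = w.getD u.length 0 := split_mid hw
  have E1 : desCount w = desCount u + (jn [x] v + desCount v) + jn u (x :: v) := by
    rw [hw, desCount_append, desCount_cons]
  have E2 : desCount (u ++ v) = desCount u + desCount v + jn u v := desCount_append u v
  have key : jn u v < jn [x] v + jn u (x :: v) := by
    by_cases hjlast : j + 1 < ac a c
    · -- x is not the last element of its run: (x, next) is a descent
      have hv : v ≠ [] := by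
        intro hveq
        rw [hveq] at hlenw
        simp only [List.length_nil] at hlenw
        have := off_add_ac_le a hck
        omega
      have hH := split_head? hw hv
      have hhead : jn [x] v = 1 := by
        rw [jn_eq_of (by rfl) hH, if_pos]
        rw [hx, hpeq]
        exact W1 c hck j hjlast
      rcases List.eq_nil_or_concat u with rfl | _
      · simp [hhead]
      · by_cases hjz : 1 ≤ j
        · -- previous element is in the same run, so (prev, x) is a descent
          have hu : u ≠ [] := by
            intro hueq; rw [hueq] at hpeq; simp at hpeq
            omega
          have hL := split_getLast? hw hu
          have hlast : jn u (x :: v) = 1 := by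
            rw [jn_eq_of hL (by rfl), if_pos]
            rw [hx, hpeq]
            have h5 := W1 c hck (j - 1) (by omega)
            have hj1 : off a c + (j - 1) + 1 = off a c + j := by omega
            rw [hj1] at h5
            have hj2 : off a c + j - 1 = off a c + (j - 1) := by omega
            rw [hj2]
            exact h5
          have := jn_le_one u v
          omega
        · -- j = 0 : x is the head of its run
          have hj0 : j = 0 := by omega
          subst hj0
          rcases Nat.eq_zero_or_pos c with rfl | hcpos
          · -- c = 0: u is empty
            have hu : u = [] := by
              have : u.length = 0 := by simpa using hpeq
              exact List.eq_nil_of_length_eq_zero this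
            subst hu
            simp [hhead]
          · -- c ≥ 1: junction; W2 gives last of prev run < second of this run
            obtain ⟨c', rfl⟩ : ∃ c', c = c' + 1 := ⟨c - 1, by omega⟩
            have hoffc : off a (c' + 1) = off a c' + ac a c' := off_succ a c'
            have hac' := ac_ge_two h2 (show c' < a.length by omega)
            have hu : u ≠ [] := by
              intro hueq; rw [hueq] at hpeq; simp at hpeq
              omega
            have hL := split_getLast? hw hu
            have hult : u.length - 1 = off a c' + ac a c' - 1 := by omega
            have hult2 : u.length + 1 = off a (c' + 1) + 1 := by omega
            have hW2 := W2 c' hck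
            have hjnuv : jn u v = 0 := by
              rw [jn_eq_of hL hH, if_neg]
              rw [hult, hult2]
              omega
            omega
    · -- x is the last element of its run; j = ac a c - 1 ≥ 1
      have hj1 : 1 ≤ j := by omega
      have hu : u ≠ [] := by
        intro hueq; rw [hueq] at hpeq; simp at hpeq
        omega
      have hL := split_getLast? hw hu
      have hlast : jn u (x :: v) = 1 := by
        rw [jn_eq_of hL (by rfl), if_pos]
        rw [hx, hpeq]
        have h5 := W1 c hck (j - 1) (by omega)
        have e1 : off a c + (j - 1) + 1 = off a c + j := by omega
        have e2 : off a c + j - 1 = off a c + (j - 1) := by omega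
        rw [e1] at h5
        rw [e2]
        exact h5
      rcases List.eq_nil_or_concat v with rfl | _
      · simp [hlast]
      · have hv : v ≠ [] := by rename_i hcc; obtain ⟨_, _, h⟩ := hcc; simp [h]
        have hH := split_head? hw hv
        have hck1 : c + 1 < a.length := by
          rcases Nat.lt_or_ge (c + 1) a.length with hlt' | hge
          · exact hlt'
          · exfalso
            have hofe : off a (c + 1) = a.sum := off_eq_sum_of_ge a hge
            have hos : off a (c + 1) = off a c + ac a c := off_succ a c
            have hvpos : 0 < v.length := List.length_pos_iff.mpr hv
            omega
        have hW3 := W3 c hck1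
        have hjnuv : jn u v = 0 := by
          rw [jn_eq_of hL hH, if_neg]
          have e1 : u.length - 1 = off a c + ac a c - 2 := by omega
          have e2 : u.length + 1 = off a (c + 1) := by rw [off_succ]; omega
          rw [e1, e2]
          omega
        omega
  omega

lemma isMinimal_of_del {w : List ℕ}
    (hdel : ∀ u x v, w = u ++ x :: v → desCount (u ++ v) < desCount w) :
    IsMinimal w := by
  refine ⟨rfl, ?_⟩
  intro m σ hσ hm hd hpat
  obtain ⟨s, hsub, hrel⟩ := hpat
  have hslen : s.length = m := by rw [hrel.1, hσ.1]
  have hdesc : (descents s).card = (descents w).card := by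
    rw [descents_eq_of_sameRelOrder hrel, hd]
  have hlt : s.length < w.length := by omega
  obtain ⟨u, x, v, hw, hs⟩ := sublist_factor hsub hlt
  have h1 : desCount s ≤ desCount (u ++ v) := desCount_le_of_sublist hs
  have h2 := hdel u x v hw
  rw [descents_card_eq_desCount, descents_card_eq_desCount] at hdesc
  omega

end TwoRegAux
namespace TwoRegAux

instance (a : List ℕ) (r c : ℕ) : Decidable (twoRegCell a r c) :=
  inferInstanceAs (Decidable (_ ∧ _ ∧ _))

def colList (a : List ℕ) (T : ℕ → ℕ → ℕ) (c : ℕ) : List ℕ :=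
  (List.range (ac a c)).map (fun j => T (rho a c - j) c)

def wordOf (a : List ℕ) (T : ℕ → ℕ → ℕ) : List ℕ :=
  ((List.range a.length).map (colList a T)).flatten

def tab (a w : List ℕ) : ℕ → ℕ → ℕ :=
  fun r c => if twoRegCell a r c then w.getD (off a c + (rho a c - r)) 0 else 0

lemma cell_ac_iff {a : List ℕ} {r c : ℕ} :
    twoRegCell a r c ↔ c < a.length ∧ colTop a c ≤ r ∧ r < colTop a c + ac a c :=
  Iff.rfl

@[simp] lemma colList_length (a : List ℕ) (T : ℕ → ℕ → ℕ) (c : ℕ) :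
    (colList a T c).length = ac a c := by simp [colList]

lemma colList_getD {a : List ℕ} (T : ℕ → ℕ → ℕ) {c j : ℕ} (hj : j < ac a c) :
    (colList a T c).getD j 0 = T (rho a c - j) c := by
  rw [List.getD_eq_getElem _ _ (by simpa using hj)]
  simp [colList]

lemma sum_range_ac (a : List ℕ) (c : ℕ) :
    ((List.range c).map (fun i => ac a i)).sum = off a c := by
  induction c with
  | zero => simp
  | succ m ih => rw [List.range_succ, off_succ]; simp [ih]

lemma wordOf_length (a : List ℕ) (T : ℕ → ℕ → ℕ) : (wordOf a T).length = a.sum := by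
  rw [wordOf, List.length_flatten, List.map_map]
  have : (List.length ∘ colList a T) = fun i => ac a i := by
    funext i; simp
  rw [this, sum_range_ac, off_length]

lemma map_length_colList (a : List ℕ) (T : ℕ → ℕ → ℕ) :
    ((List.range a.length).map (colList a T)).map List.length = a := by
  apply List.ext_getElem
  · simp
  · intro i h1 h2'
    simp only [List.getElem_map, List.getElem_range, colList_length]
    rw [ac, List.getD_eq_getElem _ _ (by simpa using h2')]

lemma getD_map_colList {a : List ℕ} (T : ℕ → ℕ → ℕ) {c : ℕ} (hc : c < a.length) :
    ((List.range a.length).map (colList a T)).getD c [] = colList a T c := by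
  rw [List.getD_eq_getElem _ _ (by simpa using hc)]
  simp

lemma wordOf_getD {a : List ℕ} (T : ℕ → ℕ → ℕ) {c j : ℕ} (hc : c < a.length)
    (hj : j < ac a c) : (wordOf a T).getD (off a c + j) 0 = T (rho a c - j) c := by
  rw [wordOf, flatten_getD' (map_length_colList a T) hc hj, getD_map_colList T hc,
    colList_getD T hj]

lemma rho_add_one {a : List ℕ} (h2 : ∀ x ∈ a, 2 ≤ x) {c : ℕ} (hc : c < a.length) :
    rho a c + 1 = colTop a c + ac a c := by
  have := ac_ge_two h2 hc
  simp only [rho]; omega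

lemma cell_of_j {a : List ℕ} (h2 : ∀ x ∈ a, 2 ≤ x) {c j : ℕ} (hc : c < a.length)
    (hj : j < ac a c) : twoRegCell a (rho a c - j) c := by
  have h1 := rho_add_one h2 hc
  rw [cell_ac_iff]
  exact ⟨hc, by omega, by omega⟩

lemma cell_bounds {a : List ℕ} {r c : ℕ} (h : twoRegCell a r c) :
    c < a.length ∧ colTop a c ≤ r ∧ r < colTop a c + ac a c := h

/-- rows where consecutive columns overlap -/
lemma overlap {a : List ℕ} (h2 : ∀ x ∈ a, 2 ≤ x) {r c : ℕ} (hc1 : c + 1 < a.length)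
    (h : twoRegCell a r c) (h' : twoRegCell a r (c + 1)) :
    r = colTop a c ∨ r = colTop a c + 1 := by
  have hcs := colTop_succ h2 hc1
  obtain ⟨_, h1, h2'⟩ := cell_bounds h
  obtain ⟨_, h3, h4⟩ := cell_bounds h'
  omega

lemma wordOf_W1 {a : List ℕ} {T : ℕ → ℕ → ℕ} (h2 : ∀ x ∈ a, 2 ≤ x)
    (hT : Is2RegularTableau a T) : ∀ c, c < a.length → ∀ j, j + 1 < ac a c →
    (wordOf a T).getD (off a c + j + 1) 0 < (wordOf a T).getD (off a c + j) 0 := by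
  obtain ⟨hzero, hbound, hinj, hsurj, hrow, hcol⟩ := hT
  intro c hc j hj
  have h1 := rho_add_one h2 hc
  have e1 : off a c + j + 1 = off a c + (j + 1) := by omega
  rw [e1, wordOf_getD T hc hj, wordOf_getD T hc (by omega)]
  have e2 : rho a c - j = (rho a c - (j + 1)) + 1 := by omega
  rw [e2]
  refine hcol _ _ (cell_of_j h2 hc (by omega)) ?_
  rw [← e2]
  exact cell_of_j h2 hc (by omega)

lemma wordOf_W2 {a : List ℕ} {T : ℕ → ℕ → ℕ} (h2 : ∀ x ∈ a, 2 ≤ x)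
    (hT : Is2RegularTableau a T) : ∀ c, c + 1 < a.length →
    (wordOf a T).getD (off a c + ac a c - 1) 0 < (wordOf a T).getD (off a (c + 1) + 1) 0 := by
  obtain ⟨hzero, hbound, hinj, hsurj, hrow, hcol⟩ := hT
  intro c hc1
  have hc : c < a.length := by omega
  have hac := ac_ge_two h2 hc
  have hac' := ac_ge_two h2 hc1
  have h1 := rho_add_one h2 hc
  have h1' := rho_add_one h2 hc1
  have hcs := colTop_succ h2 hc1
  have e1 : off a c + ac a c - 1 = off a c + (ac a c - 1) := by omega
  rw [e1, wordOf_getD T hc (by omega), wordOf_getD T hc1 (by omega)]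
  have e2 : rho a c - (ac a c - 1) = colTop a c := by omega
  have e3 : rho a (c + 1) - 1 = colTop a c := by omega
  rw [e2, e3]
  exact hrow _ _ (cell_ac_iff.mpr ⟨hc, by omega, by omega⟩)
    (cell_ac_iff.mpr ⟨hc1, by omega, by omega⟩)

lemma wordOf_W3 {a : List ℕ} {T : ℕ → ℕ → ℕ} (h2 : ∀ x ∈ a, 2 ≤ x)
    (hT : Is2RegularTableau a T) : ∀ c, c + 1 < a.length →
    (wordOf a T).getD (off a c + ac a c - 2) 0 < (wordOf a T).getD (off a (c + 1)) 0 := by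
  obtain ⟨hzero, hbound, hinj, hsurj, hrow, hcol⟩ := hT
  intro c hc1
  have hc : c < a.length := by omega
  have hac := ac_ge_two h2 hc
  have hac' := ac_ge_two h2 hc1
  have h1 := rho_add_one h2 hc
  have h1' := rho_add_one h2 hc1
  have hcs := colTop_succ h2 hc1
  have e1 : off a c + ac a c - 2 = off a c + (ac a c - 2) := by omega
  have e0 : off a (c + 1) = off a (c + 1) + 0 := by omega
  rw [e1, e0, wordOf_getD T hc (by omega), wordOf_getD T hc1 (by omega)]
  have e2 : rho a c - (ac a c - 2) = colTop a c + 1 := by omega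
  have e3 : rho a (c + 1) - 0 = colTop a c + 1 := by omega
  rw [e2, e3]
  exact hrow _ _ (cell_ac_iff.mpr ⟨hc, by omega, by omega⟩)
    (cell_ac_iff.mpr ⟨hc1, by omega, by omega⟩)

lemma tab_W4 {a : List ℕ} {T : ℕ → ℕ → ℕ} (h2 : ∀ x ∈ a, 2 ≤ x)
    (hT : Is2RegularTableau a T) : ∀ c, c + 1 < a.length →
    T (colTop a c) c < T (rho a (c + 1)) (c + 1) := by
  obtain ⟨hzero, hbound, hinj, hsurj, hrow, hcol⟩ := hT
  intro c hc1
  have hc : c < a.length := by omega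
  have hac := ac_ge_two h2 hc
  have hac' := ac_ge_two h2 hc1
  have h1 := rho_add_one h2 hc
  have h1' := rho_add_one h2 hc1
  have hcs := colTop_succ h2 hc1
  have e3 : rho a (c + 1) = colTop a c + 1 := by omega
  rw [e3]
  calc T (colTop a c) c < T (colTop a c) (c + 1) :=
        hrow _ _ (cell_ac_iff.mpr ⟨hc, by omega, by omega⟩)
          (cell_ac_iff.mpr ⟨hc1, by omega, by omega⟩)
    _ < T (colTop a c + 1) (c + 1) :=
        hcol _ _ (cell_ac_iff.mpr ⟨hc1, by omega, by omega⟩)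
          (cell_ac_iff.mpr ⟨hc1, by omega, by omega⟩)

lemma wordOf_nodup {a : List ℕ} {T : ℕ → ℕ → ℕ} (h2 : ∀ x ∈ a, 2 ≤ x)
    (hT : Is2RegularTableau a T) : (wordOf a T).Nodup := by
  obtain ⟨hzero, hbound, hinj, hsurj, hrow, hcol⟩ := hT
  rw [List.nodup_iff_injective_get]
  rintro ⟨p, hp⟩ ⟨q, hq⟩ h
  simp only [List.get_eq_getElem] at h
  have hp' : p < a.sum := by rwa [wordOf_length] at hp
  have hq' : q < a.sum := by rwa [wordOf_length] at hq
  obtain ⟨c, hc, j, hj, hpe⟩ := posDecomp a hp'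
  obtain ⟨c', hc', j', hj', hqe⟩ := posDecomp a hq'
  subst hpe; subst hqe
  rw [← List.getD_eq_getElem _ 0 hp, ← List.getD_eq_getElem _ 0 hq,
    wordOf_getD T hc hj, wordOf_getD T hc' hj'] at h
  have hcell := cell_of_j h2 hc hj
  have hcell' := cell_of_j h2 hc' hj'
  obtain ⟨hr, hcc⟩ := hinj _ _ _ _ hcell hcell' h
  subst hcc
  have h1 := rho_add_one h2 hc
  have : j = j' := by omega
  subst this
  rfl

lemma wordOf_isPermWord {a : List ℕ} {T : ℕ → ℕ → ℕ} (h2 : ∀ x ∈ a, 2 ≤ x)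
    (hT : Is2RegularTableau a T) : IsPermWord a.sum (wordOf a T) := by
  refine ⟨wordOf_length a T, wordOf_nodup h2 hT, ?_⟩
  obtain ⟨hzero, hbound, hinj, hsurj, hrow, hcol⟩ := hT
  intro x hx
  rw [wordOf, List.mem_flatten] at hx
  obtain ⟨l, hl, hxl⟩ := hx
  rw [List.mem_map] at hl
  obtain ⟨c, hc, rfl⟩ := hl
  rw [List.mem_range] at hc
  rw [colList, List.mem_map] at hxl
  obtain ⟨j, hj, rfl⟩ := hxl
  rw [List.mem_range] at hj
  exact hbound _ _ (cell_of_j h2 hc hj)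

lemma wordOf_isMinimal {a : List ℕ} {T : ℕ → ℕ → ℕ} (h2 : ∀ x ∈ a, 2 ≤ x)
    (hT : Is2RegularTableau a T) : IsMinimal (wordOf a T) :=
  isMinimal_of_del (desCount_erase_lt h2 (wordOf_length a T)
    (wordOf_W1 h2 hT) (wordOf_W2 h2 hT) (wordOf_W3 h2 hT))

lemma wordOf_hasAscentSeq {a : List ℕ} {T : ℕ → ℕ → ℕ} (h2 : ∀ x ∈ a, 2 ≤ x)
    (hT : Is2RegularTableau a T) : HasAscentSeq (wordOf a T) a := by
  have hW4 := tab_W4 h2 hT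
  obtain ⟨hzero, hbound, hinj, hsurj, hrow, hcol⟩ := hT
  refine ⟨(List.range a.length).map (colList a T), rfl, map_length_colList a T, ?_, ?_⟩
  · intro b hb
    rw [List.mem_map] at hb
    obtain ⟨c, hc, rfl⟩ := hb
    rw [List.mem_range] at hc
    have hac := ac_ge_two h2 hc
    have h1 := rho_add_one h2 hc
    constructor
    · intro hnil
      have := colList_length a T c
      rw [hnil] at this
      simp at this
      omega
    · rw [List.Chain', List.isChain_iff_getElem]
      intro i hi
      simp only [colList_length] at hi
      simp only [List.get_eq_getElem, colList, List.getElem_map, List.getElem_range]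
      have e2 : rho a c - i = (rho a c - (i + 1)) + 1 := by omega
      rw [gt_iff_lt, e2]
      refine hcol _ _ (cell_ac_iff.mpr ⟨hc, by omega, by omega⟩) ?_
      rw [← e2]
      exact cell_ac_iff.mpr ⟨hc, by omega, by omega⟩
  · rw [List.Chain', List.isChain_iff_getElem]
    intro i hi
    simp only [List.length_map, List.length_range] at hi
    have hc1 : i + 1 < a.length := by omega
    have hc : i < a.length := by omega
    have hac := ac_ge_two h2 hc
    have hac' := ac_ge_two h2 hc1
    have h1 := rho_add_one h2 hc
    have g1 : ((List.range a.length).map (colList a T)).get ⟨i, by simpa using hc⟩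
        = colList a T i := by simp
    have g2 : ((List.range a.length).map (colList a T)).get ⟨i + 1, by simpa using hc1⟩
        = colList a T (i + 1) := by simp
    simp only [List.get_eq_getElem] at g1 g2
    rw [g1, g2]
    have hne1 : colList a T i ≠ [] := by
      intro hnil
      have h5 := colList_length a T i
      rw [hnil] at h5; simp only [List.length_nil] at h5; omega
    have hne2 : colList a T (i + 1) ≠ [] := by
      intro hnil
      have h5 := colList_length a T (i + 1)
      rw [hnil] at h5; simp only [List.length_nil] at h5; omega
    have hl : (colList a T i).getLast? = some (T (colTop a i) i) := by
      rw [getLast?_eq_getD hne1, colList_length,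
        colList_getD T (show ac a i - 1 < ac a i by omega)]
      have e2 : rho a i - (ac a i - 1) = colTop a i := by omega
      rw [e2]
    have hh : (colList a T (i + 1)).head? = some (T (rho a (i + 1)) (i + 1)) := by
      rw [head?_eq_getD hne2, colList_getD T (show (0:ℕ) < ac a (i + 1) by omega)]
      simp
    refine ⟨T (colTop a i) i, by simp [hl], T (rho a (i + 1)) (i + 1), by simp [hh], ?_⟩
    exact hW4 i hc1

end TwoRegAux
namespace TwoRegAux

lemma run_length {bs : List (List ℕ)} {a : List ℕ} (hml : bs.map List.length = a)
    {c : ℕ} (hc : c < a.length) : (bs.getD c []).length = ac a c := by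
  subst hml
  have hc' : c < bs.length := by simpa using hc
  rw [List.getD_eq_getElem _ _ hc', ac, List.getD_eq_getElem _ _ (by simpa using hc)]
  simp

lemma run_getD {bs : List (List ℕ)} {a w : List ℕ} (hflat : bs.flatten = w)
    (hml : bs.map List.length = a) {c j : ℕ} (hc : c < a.length) (hj : j < ac a c) :
    w.getD (off a c + j) 0 = (bs.getD c []).getD j 0 := by
  rw [← hflat]; exact flatten_getD' hml hc hj

lemma getD_ne {w : List ℕ} (hnd : w.Nodup) {p q : ℕ} (hp : p < w.length)
    (hq : q < w.length) (hne : p ≠ q) : w.getD p 0 ≠ w.getD q 0 := by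
  rw [List.getD_eq_getElem _ _ hp, List.getD_eq_getElem _ _ hq]
  intro h
  rw [List.nodup_iff_injective_get] at hnd
  have := hnd (a₁ := ⟨p, hp⟩) (a₂ := ⟨q, hq⟩) (by simpa using h)
  simp at this
  exact hne this

lemma asc_W1 {a w : List ℕ} (hasc : HasAscentSeq w a) :
    ∀ c, c < a.length → ∀ j, j + 1 < ac a c →
      w.getD (off a c + j + 1) 0 < w.getD (off a c + j) 0 := by
  obtain ⟨bs, hflat, hml, hruns, hchain⟩ := hasc
  intro c hc j hj
  have hbl : bs.length = a.length := by rw [← hml]; simp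
  have hrl := run_length hml hc
  have hb : bs.getD c [] ∈ bs := by
    rw [List.getD_eq_getElem _ _ (by omega)]
    exact List.getElem_mem _
  have hch := (hruns _ hb).2
  rw [List.Chain', List.isChain_iff_getElem] at hch
  have hlt := hch j (by omega)
  have e1 : off a c + j + 1 = off a c + (j + 1) := by omega
  have g1 : (bs.getD c []).getD j 0 = (bs.getD c [])[j]'(by omega) :=
    List.getD_eq_getElem _ _ (by omega)
  have g2 : (bs.getD c []).getD (j + 1) 0 = (bs.getD c [])[j + 1]'(by omega) :=
    List.getD_eq_getElem _ _ (by omega)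
  rw [e1, run_getD hflat hml hc (by omega), run_getD hflat hml hc (by omega), g1, g2]
  exact hlt

lemma asc_W4 {a w : List ℕ} (h2 : ∀ x ∈ a, 2 ≤ x) (hasc : HasAscentSeq w a) :
    ∀ c, c + 1 < a.length →
      w.getD (off a c + ac a c - 1) 0 < w.getD (off a (c + 1)) 0 := by
  obtain ⟨bs, hflat, hml, hruns, hchain⟩ := hasc
  intro c hc1
  have hc : c < a.length := by omega
  have hac := ac_ge_two h2 hc
  have hac' := ac_ge_two h2 hc1
  have hbl : bs.length = a.length := by rw [← hml]; simp
  have hrl := run_length hml hc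
  have hrl' := run_length hml hc1
  rw [List.Chain', List.isChain_iff_getElem] at hchain
  have hR := hchain c (by omega)
  obtain ⟨x, hx, y, hy, hxy⟩ := hR
  have hg1 : bs[c] = bs.getD c [] := by rw [List.getD_eq_getElem _ _ (by omega)]
  have hg2 : bs[c+1] = bs.getD (c+1) [] := by
    rw [List.getD_eq_getElem _ _ (show c + 1 < bs.length by omega)]
  rw [hg1] at hx
  rw [hg2] at hy
  have hbne : bs.getD c [] ≠ [] := by
    intro hnil; rw [hnil] at hrl; simp at hrl; omega
  have hbne' : bs.getD (c+1) [] ≠ [] := by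
    intro hnil; rw [hnil] at hrl'; simp at hrl'; omega
  rw [getLast?_eq_getD hbne] at hx
  rw [head?_eq_getD hbne'] at hy
  simp only [Option.mem_def, Option.some.injEq] at hx hy
  subst hx; subst hy
  have e1 : off a c + ac a c - 1 = off a c + (ac a c - 1) := by omega
  have e2 : off a (c + 1) = off a (c + 1) + 0 := by omega
  rw [e1, e2, run_getD hflat hml hc (by omega), run_getD hflat hml hc1 (by omega)]
  rw [hrl] at hxy
  exact hxy

lemma take_drop_split {w : List ℕ} {q : ℕ} (hq : q < w.length) :
    w = w.take q ++ w.getD q 0 :: w.drop (q + 1) := by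
  rw [List.getD_eq_getElem _ _ hq]
  conv_lhs => rw [← List.take_append_drop q w]
  rw [List.drop_eq_getElem_cons hq]

lemma erase_sublist' {w : List ℕ} {q : ℕ} (hq : q < w.length) :
    (w.take q ++ w.drop (q + 1)).Sublist w := by
  conv_rhs => rw [take_drop_split hq]
  exact List.Sublist.append_left (List.sublist_cons_self _ _) _

lemma erase_length {w : List ℕ} {q : ℕ} (hq : q < w.length) :
    (w.take q ++ w.drop (q + 1)).length = w.length - 1 := by
  simp only [List.length_append, List.length_take, List.length_drop]
  omega

lemma desCount_erase_eq {w : List ℕ} {q : ℕ} (hq1 : 1 ≤ q) (hq2 : q + 1 < w.length)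
    (hcase :
      (w.getD q 0 < w.getD (q - 1) 0 ∧ ¬ w.getD (q + 1) 0 < w.getD q 0 ∧
        w.getD (q + 1) 0 < w.getD (q - 1) 0) ∨
      (¬ w.getD q 0 < w.getD (q - 1) 0 ∧ w.getD (q + 1) 0 < w.getD q 0 ∧
        w.getD (q + 1) 0 < w.getD (q - 1) 0)) :
    desCount (w.take q ++ w.drop (q + 1)) = desCount w := by
  have hqlt : q < w.length := by omega
  have hw := take_drop_split hqlt
  set u := w.take q with hu
  set v := w.drop (q + 1) with hv
  set x := w.getD q 0 with hxd
  have hul : u.length = q := by rw [hu, List.length_take]; omega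
  have hune : u ≠ [] := by
    intro h; rw [h] at hul; simp at hul; omega
  have hvne : v ≠ [] := by
    intro h
    have : v.length = w.length - (q + 1) := by rw [hv, List.length_drop]
    rw [h] at this; simp at this; omega
  have hL : u.getLast? = some (w.getD (q - 1) 0) := by
    have := split_getLast? hw hune
    rwa [hul] at this
  have hH : v.head? = some (w.getD (q + 1) 0) := by
    have := split_head? hw hvne
    rwa [hul] at this
  have E1 : desCount w = desCount u + (jn [x] v + desCount v) + jn u (x :: v) := by
    conv_lhs => rw [hw]
    rw [desCount_append, desCount_cons]
  have E2 : desCount (u ++ v) = desCount u + desCount v + jn u v := desCount_append u v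
  have j1 : jn u (x :: v) = if x < w.getD (q - 1) 0 then 1 else 0 := jn_eq_of hL rfl
  have j2 : jn [x] v = if w.getD (q + 1) 0 < x then 1 else 0 := jn_eq_of rfl hH
  have j3 : jn u v = if w.getD (q + 1) 0 < w.getD (q - 1) 0 then 1 else 0 := jn_eq_of hL hH
  rcases hcase with ⟨h1, h2, h3⟩ | ⟨h1, h2, h3⟩
  · rw [if_pos h1] at j1
    rw [if_neg h2] at j2
    rw [if_pos h3] at j3
    omega
  · rw [if_neg h1] at j1
    rw [if_pos h2] at j2
    rw [if_pos h3] at j3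
    omega

lemma min_contradiction {w : List ℕ} (hperm : IsPermWord w.length w) (hmin : IsMinimal w)
    {q : ℕ} (hq2 : q + 1 < w.length)
    (hdes : desCount (w.take q ++ w.drop (q + 1)) = desCount w) : False := by
  have hqlt : q < w.length := by omega
  set s := w.take q ++ w.drop (q + 1) with hs
  have hsub : s.Sublist w := erase_sublist' hqlt
  have hslen : s.length = w.length - 1 := erase_length hqlt
  have hnodup : s.Nodup := hperm.2.1.sublist hsub
  have hstd := isPermWord_std hnodup
  have hrel := sameRelOrder_std s
  have hcard : (descents (std s)).card = (descents w).card := by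
    rw [← descents_eq_of_sameRelOrder hrel, descents_card_eq_desCount,
      descents_card_eq_desCount, hdes]
  exact hmin.2 s.length (std s) hstd (by omega) hcard ⟨s, hsub, hrel⟩

lemma min_W3 {a w : List ℕ} (h2 : ∀ x ∈ a, 2 ≤ x) (hperm : IsPermWord a.sum w)
    (hmin : IsMinimal w) (hasc : HasAscentSeq w a) :
    ∀ c, c + 1 < a.length →
      w.getD (off a c + ac a c - 2) 0 < w.getD (off a (c + 1)) 0 := by
  intro c hc1
  have hc : c < a.length := by omega
  have hac := ac_ge_two h2 hc
  have hac' := ac_ge_two h2 hc1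
  have hlen : w.length = a.sum := hperm.1
  have hoffs : off a (c + 1) = off a c + ac a c := off_succ a c
  have hle := off_add_ac_le a hc1
  set q := off a c + ac a c - 1 with hqdef
  have hq1 : 1 ≤ q := by omega
  have hq2 : q + 1 < w.length := by omega
  have eqm : q - 1 = off a c + ac a c - 2 := by omega
  have eqp : q + 1 = off a (c + 1) := by omega
  by_contra hcon
  have hne : w.getD (q - 1) 0 ≠ w.getD (q + 1) 0 := by
    apply getD_ne hperm.2.1 (by omega) (by omega) (by omega)
  rw [eqm, eqp] at hne
  have hgt : w.getD (off a (c + 1)) 0 < w.getD (off a c + ac a c - 2) 0 := by omega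
  have hW1 := asc_W1 hasc c hc (ac a c - 2) (by omega)
  have hW4 := asc_W4 h2 hasc c hc1
  have e1 : off a c + (ac a c - 2) + 1 = q := by omega
  have e2 : off a c + (ac a c - 2) = off a c + ac a c - 2 := by omega
  rw [e1, e2] at hW1
  -- hW1 : w[q] < w[q-1-index], i.e. descent before q
  apply min_contradiction (hlen ▸ hperm) hmin hq2
  apply desCount_erase_eq hq1 hq2
  left
  refine ⟨?_, ?_, ?_⟩
  · rw [eqm]; exact hW1
  · rw [eqp]
    intro hcontra
    have : w.getD q 0 < w.getD (off a (c + 1)) 0 := by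
      have e3 : off a c + ac a c - 1 = q := by omega
      rw [e3] at hW4; exact hW4
    omega
  · rw [eqm, eqp]; exact hgt

lemma min_W2 {a w : List ℕ} (h2 : ∀ x ∈ a, 2 ≤ x) (hperm : IsPermWord a.sum w)
    (hmin : IsMinimal w) (hasc : HasAscentSeq w a) :
    ∀ c, c + 1 < a.length →
      w.getD (off a c + ac a c - 1) 0 < w.getD (off a (c + 1) + 1) 0 := by
  intro c hc1
  have hc : c < a.length := by omega
  have hac := ac_ge_two h2 hc
  have hac' := ac_ge_two h2 hc1
  have hlen : w.length = a.sum := hperm.1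
  have hoffs : off a (c + 1) = off a c + ac a c := off_succ a c
  have hle := off_add_ac_le a hc1
  have hq1 : 1 ≤ off a (c + 1) := by omega
  have hq2 : off a (c + 1) + 1 < w.length := by omega
  by_contra hcon
  have hne : w.getD (off a (c + 1) - 1) 0 ≠ w.getD (off a (c + 1) + 1) 0 :=
    getD_ne hperm.2.1 (by omega) (by omega) (by omega)
  have eqm : off a (c + 1) - 1 = off a c + ac a c - 1 := by omega
  rw [eqm] at hne
  have hgt : w.getD (off a (c + 1) + 1) 0 < w.getD (off a c + ac a c - 1) 0 := by omega
  have hW1 := asc_W1 hasc (c + 1) hc1 0 (by omega)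
  have e1 : off a (c + 1) + 0 + 1 = off a (c + 1) + 1 := by omega
  have e2 : off a (c + 1) + 0 = off a (c + 1) := by omega
  rw [e1, e2] at hW1
  have hW4 := asc_W4 h2 hasc c hc1
  apply min_contradiction (hlen ▸ hperm) hmin hq2
  apply desCount_erase_eq hq1 hq2
  right
  refine ⟨?_, hW1, ?_⟩
  · rw [eqm]
    intro hcontra
    omega
  · rw [eqm]; exact hgt

end TwoRegAux
namespace TwoRegAux

lemma mem_of_isPermWord {n : ℕ} {w : List ℕ} (hperm : IsPermWord n w) {v : ℕ}
    (h1 : 1 ≤ v) (h2 : v ≤ n) : v ∈ w := by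
  obtain ⟨hlen, hnd, hbd⟩ := hperm
  have hsub : w.toFinset ⊆ Finset.Icc 1 n := by
    intro x hx
    rw [List.mem_toFinset] at hx
    rw [Finset.mem_Icc]
    exact hbd x hx
  have hcard : (Finset.Icc 1 n).card ≤ w.toFinset.card := by
    rw [Nat.card_Icc, List.toFinset_card_of_nodup hnd, hlen]
    omega
  have heq := Finset.eq_of_subset_of_card_le hsub hcard
  rw [← List.mem_toFinset, heq, Finset.mem_Icc]
  exact ⟨h1, h2⟩

lemma tab_is2Reg {a w : List ℕ} (h2 : ∀ x ∈ a, 2 ≤ x) (hperm : IsPermWord a.sum w)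
    (W1 : ∀ c, c < a.length → ∀ j, j + 1 < ac a c →
      w.getD (off a c + j + 1) 0 < w.getD (off a c + j) 0)
    (W2 : ∀ c, c + 1 < a.length →
      w.getD (off a c + ac a c - 1) 0 < w.getD (off a (c + 1) + 1) 0)
    (W3 : ∀ c, c + 1 < a.length →
      w.getD (off a c + ac a c - 2) 0 < w.getD (off a (c + 1)) 0) :
    Is2RegularTableau a (tab a w) := by
  have hlen := hperm.1
  refine ⟨?_, ?_, ?_, ?_, ?_, ?_⟩
  · intro r c h
    exact if_neg h
  · intro r c h
    simp only [tab]
    rw [if_pos h]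
    obtain ⟨hc, hb1, hb2⟩ := cell_bounds h
    have hrho := rho_add_one h2 hc
    have hle := off_add_ac_le a hc
    exact hperm.2.2 _ (getD_mem (by omega))
  · intro r c r' c' h h' heq
    simp only [tab] at heq
    rw [if_pos h, if_pos h'] at heq
    obtain ⟨hc, hb1, hb2⟩ := cell_bounds h
    obtain ⟨hc', hb1', hb2'⟩ := cell_bounds h'
    have hrho := rho_add_one h2 hc
    have hrho' := rho_add_one h2 hc'
    have hle := off_add_ac_le a hc
    have hle' := off_add_ac_le a hc'
    have hij : off a c + (rho a c - r) = off a c' + (rho a c' - r') := by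
      by_contra hne
      exact getD_ne hperm.2.1 (by omega) (by omega) hne heq
    obtain ⟨hcc, hjj⟩ := pos_inj a hc hc' (by omega) (by omega) hij
    subst hcc
    exact ⟨by omega, rfl⟩
  · intro v hv1 hv2
    have hvmem := mem_of_isPermWord hperm hv1 hv2
    obtain ⟨p, hp, hpv⟩ := List.mem_iff_getElem.mp hvmem
    have hp' : p < a.sum := hlen ▸ hp
    obtain ⟨c, hc, j, hj, hpe⟩ := posDecomp a hp'
    subst hpe
    have hrho := rho_add_one h2 hc
    refine ⟨rho a c - j, c, cell_of_j h2 hc hj, ?_⟩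
    simp only [tab]
    rw [if_pos (cell_of_j h2 hc hj)]
    have e1 : rho a c - (rho a c - j) = j := by omega
    rw [e1, List.getD_eq_getElem _ _ hp]
    exact hpv
  · intro r c h h'
    obtain ⟨hc, hb1, hb2⟩ := cell_bounds h
    obtain ⟨hc', hb1', hb2'⟩ := cell_bounds h'
    simp only [tab]
    rw [if_pos h, if_pos h']
    have hover := overlap h2 hc' h h'
    have hrho := rho_add_one h2 hc
    have hrho' := rho_add_one h2 hc'
    have hcs := colTop_succ h2 hc'
    rcases hover with h5 | h5 <;> subst h5
    · have e1 : off a c + (rho a c - colTop a c) = off a c + ac a c - 1 := by omega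
      have e2 : rho a (c + 1) - colTop a c = 1 := by omega
      rw [e1, e2]
      exact W2 c hc'
    · have e1 : off a c + (rho a c - (colTop a c + 1)) = off a c + ac a c - 2 := by omega
      have e2 : rho a (c + 1) - (colTop a c + 1) = 0 := by omega
      rw [e1, e2]
      have e3 : off a (c + 1) + 0 = off a (c + 1) := by omega
      rw [e3]
      exact W3 c hc'
  · intro r c h h'
    obtain ⟨hc, hb1, hb2⟩ := cell_bounds h
    obtain ⟨hc', hb1', hb2'⟩ := cell_bounds h'
    simp only [tab]
    rw [if_pos h, if_pos h']
    have hrho := rho_add_one h2 hc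
    have hW1 := W1 c hc (rho a c - (r + 1)) (by omega)
    have e1 : off a c + (rho a c - (r + 1)) + 1 = off a c + (rho a c - r) := by omega
    rw [e1] at hW1
    exact hW1

lemma wordOf_tab {a w : List ℕ} (h2 : ∀ x ∈ a, 2 ≤ x) (hperm : IsPermWord a.sum w) :
    wordOf a (tab a w) = w := by
  apply List.ext_getElem
  · rw [wordOf_length, hperm.1]
  · intro p hp1 hp2
    have hp : p < a.sum := by rwa [wordOf_length] at hp1
    obtain ⟨c, hc, j, hj, hpe⟩ := posDecomp a hp
    subst hpe
    have hrho := rho_add_one h2 hc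
    rw [← List.getD_eq_getElem _ 0 hp1, ← List.getD_eq_getElem _ 0 hp2,
      wordOf_getD _ hc hj]
    simp only [tab]
    rw [if_pos (cell_of_j h2 hc hj)]
    have e1 : rho a c - (rho a c - j) = j := by omega
    rw [e1]

lemma tab_wordOf {a : List ℕ} {T : ℕ → ℕ → ℕ} (h2 : ∀ x ∈ a, 2 ≤ x)
    (hT : Is2RegularTableau a T) : tab a (wordOf a T) = T := by
  funext r c
  by_cases h : twoRegCell a r c
  · obtain ⟨hc, hb1, hb2⟩ := cell_bounds h
    have hrho := rho_add_one h2 hc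
    simp only [tab]
    rw [if_pos h, wordOf_getD T hc (show rho a c - r < ac a c by omega)]
    have e1 : rho a c - (rho a c - r) = r := by omega
    rw [e1]
  · simp only [tab]
    rw [if_neg h]
    exact (hT.1 r c h).symm

end TwoRegAux
open TwoRegAux in
/-- for `a = (a₁,…,a_k)` with each `aᵢ ≥ 2` and `a₁+⋯+a_k = n`, the set
`𝓕_{a₁,…,a_k}(n)` of minimal permutations of length `n` with ascent sequence `a` is in
bijection with the set `𝓟_{a₁,…,a_k}(n)` of 2-regular skew tableaux with column lengths
`a₁,…,a_k`; in particular the two sets have the same cardinality. -/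
theorem minimalPerms_equiv_twoRegularTableaux (n : ℕ) (a : List ℕ)
    (h2 : ∀ x ∈ a, 2 ≤ x) (hsum : a.sum = n) :
    Nonempty ((minimalPermsAsc n a) ≃ {T : ℕ → ℕ → ℕ // Is2RegularTableau a T}) ∧
      (minimalPermsAsc n a).ncard = Nat.card {T : ℕ → ℕ → ℕ // Is2RegularTableau a T} := by
  subst hsum
  have hmemF : ∀ w : List ℕ, w ∈ minimalPermsAsc a.sum a → Is2RegularTableau a (tab a w) := by
    intro w hw
    obtain ⟨hperm, hmin, hasc⟩ := hw
    exact tab_is2Reg h2 hperm (asc_W1 hasc) (min_W2 h2 hperm hmin hasc)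
      (min_W3 h2 hperm hmin hasc)
  have hmemP : ∀ T : ℕ → ℕ → ℕ, Is2RegularTableau a T →
      wordOf a T ∈ minimalPermsAsc a.sum a := by
    intro T hT
    exact ⟨wordOf_isPermWord h2 hT, wordOf_isMinimal h2 hT, wordOf_hasAscentSeq h2 hT⟩
  let e : (minimalPermsAsc a.sum a) ≃ {T : ℕ → ℕ → ℕ // Is2RegularTableau a T} :=
    { toFun := fun x => ⟨tab a x.1, hmemF x.1 x.2⟩
      invFun := fun t => ⟨wordOf a t.1, hmemP t.1 t.2⟩
      left_inv := fun x => Subtype.ext (wordOf_tab h2 x.2.1)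
      right_inv := fun t => Subtype.ext (tab_wordOf h2 t.2) }
  refine ⟨⟨e⟩, ?_⟩
  rw [← Nat.card_coe_set_eq]
  exact Nat.card_congr e
end
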